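/- arXiv:1001.0023 — 8 statements merged into one kernel-verified Lean document; each statement's English description precedes it below -/
import Mathlib

section
/- Fix p ∈ ℝ^n. Let I_p denote the ideal of C∞(ℝ^n) consisting of all f that vanish identically on some neighbourhood of p, and let S_p denote the multiplicative submonoid {g ∈ C∞(ℝ^n) : g(p) ≠ 0}. Then the quotient map C∞(ℝ^n) → C∞(ℝ^n)/I_p exhibits C∞(ℝ^n)/I_p as the localization of C∞(ℝ^n) at S_p (i.e. the quotient algebra satisfies the IsLocalization predicate with respect to S_p). -/
set_option synthInstance.maxHeartbeats 1000000
set_option maxHeartbeats 1000000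

noncomputable section

/-- The `ℝ`-algebra `C∞(ℝ^n)` of smooth functions `ℝ^n → ℝ`. -/
def SmoothAlg (n : ℕ) : Subalgebra ℝ ((Fin n → ℝ) → ℝ) where
  carrier := {f | ContDiff ℝ (⊤ : ℕ∞) f}
  mul_mem' := fun {f g} hf hg => by
    simp only [Set.mem_setOf_eq] at *; exact hf.mul hg
  one_mem' := by simp only [Set.mem_setOf_eq]; exact contDiff_const
  add_mem' := fun {f g} hf hg => by
    simp only [Set.mem_setOf_eq] at *; exact hf.add hg
  zero_mem' := by simp only [Set.mem_setOf_eq]; exact contDiff_const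
  algebraMap_mem' := fun r => by
    simp only [Set.mem_setOf_eq]; exact contDiff_const


/-- The ideal `I_p` of smooth functions vanishing identically near `p`. -/
def germIdeal (n : ℕ) (p : Fin n → ℝ) : Ideal (SmoothAlg n) where
  carrier := {f | ∀ᶠ x in nhds p, (f : (Fin n → ℝ) → ℝ) x = 0}
  add_mem' := fun {f g} hf hg => by
    simp only [Set.mem_setOf_eq] at *
    filter_upwards [hf, hg] with x hfx hgx
    show (f : (Fin n → ℝ) → ℝ) x + (g : (Fin n → ℝ) → ℝ) x = 0
    rw [hfx, hgx, add_zero]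
  zero_mem' := by
    simp only [Set.mem_setOf_eq]
    exact Filter.Eventually.of_forall fun x => rfl
  smul_mem' := fun c f hf => by
    simp only [Set.mem_setOf_eq] at *
    filter_upwards [hf] with x hfx
    show (c : (Fin n → ℝ) → ℝ) x * (f : (Fin n → ℝ) → ℝ) x = 0
    rw [hfx, mul_zero]

/-- The multiplicative submonoid `S_p` of smooth functions nonvanishing at `p`. -/
def evalSubmonoid (n : ℕ) (p : Fin n → ℝ) : Submonoid (SmoothAlg n) where
  carrier := {g | (g : (Fin n → ℝ) → ℝ) p ≠ 0}
  mul_mem' := fun {a b} ha hb => by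
    simp only [Set.mem_setOf_eq] at *
    show (a : (Fin n → ℝ) → ℝ) p * (b : (Fin n → ℝ) → ℝ) p ≠ 0
    exact mul_ne_zero ha hb
  one_mem' := by
    simp only [Set.mem_setOf_eq]
    show (1 : ℝ) ≠ 0
    exact one_ne_zero


open Metric Function

lemma exists_smooth_inv {n : ℕ} {p : Fin n → ℝ} (g : (Fin n → ℝ) → ℝ)
    (hg : ContDiff ℝ (⊤ : ℕ∞) g) (hgp : g p ≠ 0) :
    ∃ h : (Fin n → ℝ) → ℝ, ContDiff ℝ (⊤ : ℕ∞) h ∧ ∀ᶠ x in nhds p, h x * g x = 1 := by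
  obtain ⟨ε, hε, hball⟩ : ∃ ε > 0, ∀ x ∈ ball p ε, g x ≠ 0 := by
    have : ∀ᶠ x in nhds p, g x ≠ 0 := hg.continuous.continuousAt.eventually_ne hgp
    exact Metric.eventually_nhds_iff_ball.mp this
  set χb : ContDiffBump p := ⟨ε/4, ε/2, by positivity, by linarith⟩ with hχb
  set h : (Fin n → ℝ) → ℝ := fun x => χb x * (g x)⁻¹ with hh
  have hclosed : closedBall p (ε/2) ⊆ ball p ε := closedBall_subset_ball (by linarith)
  refine ⟨h, ?_, ?_⟩
  · rw [contDiff_iff_contDiffAt]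
    intro x
    by_cases hx : g x ≠ 0
    · exact (χb.contDiff.contDiffAt).mul ((hg.contDiffAt).inv hx)
    · push_neg at hx
      have hx' : x ∉ closedBall p (ε/2) := fun hmem => hball x (hclosed hmem) hx
      have hev : ∀ᶠ y in nhds x, h y = 0 := by
        have hopen : IsOpen (closedBall p (ε/2))ᶜ := isClosed_closedBall.isOpen_compl
        filter_upwards [hopen.mem_nhds hx'] with y hy
        have hχ : χb y = 0 := by
          by_contra hne
          exact hy (ball_subset_closedBall (χb.support_eq ▸ (mem_support.mpr hne)))
        simp [hh, hχ]
      exact (contDiffAt_const (c := (0:ℝ))).congr_of_eventuallyEq hev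
  · filter_upwards [ball_mem_nhds p (show (0:ℝ) < ε/4 by positivity)] with x hx
    have h1 : χb x = 1 := χb.one_of_mem_closedBall (ball_subset_closedBall hx)
    have h2 : g x ≠ 0 := hball x (ball_subset_ball (by linarith) hx)
    simp [hh, h1, inv_mul_cancel₀ h2]

/-- The ring of germs at `p`, i.e. the quotient `C^∞(ℝ^n)/I_p`, is the localization of
`C^∞(ℝ^n)` at the multiplicative set `S_p = {g : g(p) ≠ 0}`. -/
theorem germ_quotient_isLocalization (n : ℕ) (p : Fin n → ℝ) :
    IsLocalization (evalSubmonoid n p) (SmoothAlg n ⧸ germIdeal n p) := by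
  have hmk : algebraMap (SmoothAlg n) (SmoothAlg n ⧸ germIdeal n p)
      = Ideal.Quotient.mk (germIdeal n p) := rfl
  constructor
  constructor
  · -- map_units
    rintro ⟨g, hg⟩
    obtain ⟨h, hhs, hinv⟩ := exists_smooth_inv (g : (Fin n → ℝ) → ℝ) g.2 hg
    refine IsUnit.of_mul_eq_one (Ideal.Quotient.mk (germIdeal n p) (⟨h, hhs⟩ : SmoothAlg n)) ?_
    rw [hmk, ← map_mul, ← map_one (Ideal.Quotient.mk (germIdeal n p)),
      Ideal.Quotient.mk_eq_mk_iff_sub_mem]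
    show ∀ᶠ x in nhds p, ((g * ⟨h, hhs⟩ - 1 : SmoothAlg n) : (Fin n → ℝ) → ℝ) x = 0
    filter_upwards [hinv] with x hx
    show (g : (Fin n → ℝ) → ℝ) x * h x - 1 = 0
    rw [mul_comm, hx, sub_self]
  · -- surj
    intro z
    obtain ⟨f, rfl⟩ := Ideal.Quotient.mk_surjective z
    refine ⟨(f, 1), ?_⟩
    rw [hmk, ← map_mul]
    congr 1
    exact mul_one f
  · -- exists_of_eq
    intro f g hfg
    rw [hmk, Ideal.Quotient.mk_eq_mk_iff_sub_mem] at hfg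
    have hfg' : ∀ᶠ x in nhds p, ((f - g : SmoothAlg n) : (Fin n → ℝ) → ℝ) x = 0 := hfg
    obtain ⟨ε, hε, hball⟩ := Metric.eventually_nhds_iff_ball.mp hfg'
    set χb : ContDiffBump p := ⟨ε/4, ε/2, by positivity, by linarith⟩ with hχb
    have hχp : (χb : (Fin n → ℝ) → ℝ) p = 1 :=
      χb.one_of_mem_closedBall (mem_closedBall_self (by positivity))
    refine ⟨⟨⟨χb, χb.contDiff⟩, ?_⟩, ?_⟩
    · show (χb : (Fin n → ℝ) → ℝ) p ≠ 0
      rw [hχp]; exact one_ne_zero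
    · apply Subtype.ext
      funext x
      show (χb : (Fin n → ℝ) → ℝ) x * (f : (Fin n → ℝ) → ℝ) x
        = (χb : (Fin n → ℝ) → ℝ) x * (g : (Fin n → ℝ) → ℝ) x
      by_cases hx : x ∈ ball p ε
      · have := hball x hx
        have : (f : (Fin n → ℝ) → ℝ) x = (g : (Fin n → ℝ) → ℝ) x := by
          have h0 : (f : (Fin n → ℝ) → ℝ) x - (g : (Fin n → ℝ) → ℝ) x = 0 := this
          linarith
        rw [this]
      · have hχ : (χb : (Fin n → ℝ) → ℝ) x = 0 := by
          by_contra hne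
          have hmem : x ∈ ball p (ε/2) := χb.support_eq ▸ (mem_support.mpr hne)
          exact hx (ball_subset_ball (by linarith : ε/2 ≤ ε) hmem)
        rw [hχ, zero_mul, zero_mul]
end
end

section
/- Every finitely generated ideal of C∞(ℝ^n) is germ-determined. That is, if I ⊆ C∞(ℝ^n) is an ideal generated by finitely many elements g_1,…,g_k, and f ∈ C∞(ℝ^n) has the property that for every p ∈ ℝ^n there exists g ∈ I with f = g on some neighbourhood of p, then f ∈ I. -/
open Manifold

noncomputable section

/-- Every finitely generated ideal of `C^∞(ℝ^n)` is germ-determined: if `f` agrees near each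
point of `ℝ^n` with some element of the ideal generated by `g 0, …, g (k-1)`, then `f` lies
in that ideal. -/
theorem finitely_generated_ideal_germ_determined (n k : ℕ) (g : Fin k → SmoothAlg n)
    (f : SmoothAlg n)
    (hf : ∀ p : Fin n → ℝ, ∃ h ∈ Ideal.span (Set.range g),
        ∀ᶠ x in nhds p, (f : (Fin n → ℝ) → ℝ) x = (h : (Fin n → ℝ) → ℝ) x) :
    f ∈ Ideal.span (Set.range g) := by
  classical
  set E := Fin n → ℝ
  -- choose local coefficients
  have key : ∀ p : E, ∃ a : Fin k → SmoothAlg n,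
      ∀ᶠ x in nhds p, (f : E → ℝ) x = ((∑ i, a i * g i : SmoothAlg n) : E → ℝ) x := by
    intro p
    obtain ⟨h, hmem, heq⟩ := hf p
    obtain ⟨a, ha⟩ := Ideal.mem_span_range_iff_exists_fun.mp hmem
    exact ⟨a, by rwa [ha]⟩
  choose a ha using key
  set hfun : E → E → ℝ := fun p => ((∑ i, a p i * g i : SmoothAlg n) : E → ℝ) with hfun_def
  set U : E → Set E := fun p => {x | ∀ᶠ y in nhds x, (f : E → ℝ) y = hfun p y} with hU_def
  have hUopen : ∀ p, IsOpen (U p) := fun p => isOpen_setOf_eventually_nhds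
  have hUmem : ∀ p, p ∈ U p := fun p => ha p
  obtain ⟨ρ, hρ⟩ := SmoothPartitionOfUnity.exists_isSubordinate (𝓘(ℝ, E)) isClosed_univ U
    hUopen (fun x _ => Set.mem_iUnion.mpr ⟨x, hUmem x⟩)
  -- the global coefficients
  have hsmooth : ∀ i : Fin k, ContDiff ℝ (⊤ : ℕ∞)
      (fun x => ∑ᶠ p : E, ρ p x • ((a p i : E → ℝ) x)) := by
    intro i
    have := ρ.contMDiff_finsum_smul (g := fun p => ((a p i : E → ℝ)))
      (fun p x _ => ((contMDiff_iff_contDiff).mpr (show ContDiff ℝ (⊤ : ℕ∞) (a p i : E → ℝ) from (a p i).2)).contMDiffAt)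
    exact (contMDiff_iff_contDiff).mp this
  set c : Fin k → SmoothAlg n := fun i => ⟨_, hsmooth i⟩ with hc_def
  refine Ideal.mem_span_range_iff_exists_fun.mpr ⟨c, ?_⟩
  apply Subtype.ext
  funext x
  have hfin : (Function.support fun p : E => ρ p x).Finite :=
    ρ.locallyFinite.point_finite x
  have coesum : ((∑ i, c i * g i : SmoothAlg n) : E → ℝ) x
      = ∑ i, (fun y => ∑ᶠ p : E, ρ p y • ((a p i : E → ℝ) y)) x * (g i : E → ℝ) x := by
    rw [show ((∑ i, c i * g i : SmoothAlg n) : E → ℝ) = (SmoothAlg n).val (∑ i, c i * g i) from rfl,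
      map_sum]
    simp [hc_def]
  rw [coesum]
  have step1 : ∀ i : Fin k,
      (∑ᶠ p : E, ρ p x • ((a p i : E → ℝ) x)) * (g i : E → ℝ) x
      = ∑ᶠ p : E, (ρ p x • ((a p i : E → ℝ) x)) * (g i : E → ℝ) x := by
    intro i
    refine finsum_mul' _ _ (hfin.subset ?_)
    intro p hp
    simp only [Function.mem_support] at hp ⊢
    intro h0
    apply hp
    simp [h0]
  simp only [step1]
  rw [sum_finsum_comm]
  · have step2 : ∀ p : E, (∑ i, (ρ p x • ((a p i : E → ℝ) x)) * (g i : E → ℝ) x)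
        = ρ p x * (f : E → ℝ) x := by
      intro p
      have : (∑ i, (ρ p x • ((a p i : E → ℝ) x)) * (g i : E → ℝ) x)
          = ρ p x * hfun p x := by
        rw [hfun_def]
        simp only [smul_eq_mul, mul_assoc, ← Finset.mul_sum]
        congr 1
        rw [show ((∑ i, a p i * g i : SmoothAlg n) : E → ℝ)
            = (SmoothAlg n).val (∑ i, a p i * g i) from rfl, map_sum]
        simp
      rw [this]
      rcases eq_or_ne (ρ p x) 0 with h0 | h0
      · simp [h0]
      · have hx : x ∈ U p := hρ p (subset_closure (Function.mem_support.mpr h0))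
        have := hx.self_of_nhds
        rw [this]
    simp only [step2]
    rw [← finsum_mul' _ _ hfin, ρ.sum_eq_one (Set.mem_univ x), one_mul]
  · intro i _
    refine hfin.subset ?_
    intro p hp
    simp only [Function.mem_support] at hp ⊢
    intro h0
    apply hp
    simp [h0]
end
end

section
/- Let X ⊆ ℝ^n be a closed subset and g_1,…,g_k ∈ C∞(ℝ^n). Then the ideal of C∞(ℝ^n) generated by g_1,…,g_k together with m_X^∞ (i.e. the sum of the ideal (g_1,…,g_k) and the ideal m_X^∞) is germ-determined. -/
noncomputable section

open Set Filter Function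
open scoped Manifold

/-- Eventually-equal functions have equal iterated derivatives. -/
lemma iteratedFDeriv_congr_ev {E F : Type*} [NormedAddCommGroup E] [NormedSpace ℝ E]
    [NormedAddCommGroup F] [NormedSpace ℝ F] {f g : E → F} {x : E}
    (h : f =ᶠ[nhds x] g) (j : ℕ) : iteratedFDeriv ℝ j f x = iteratedFDeriv ℝ j g x := by
  simp only [← iteratedFDerivWithin_univ]
  exact Filter.EventuallyEq.iteratedFDerivWithin_eq (by rwa [← nhdsWithin_univ] at h)
    h.self_of_nhds j

/-- The product of a smooth function with a function flat at `x` is flat at `x`. -/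
lemma flat_mul_aux {E : Type*} [NormedAddCommGroup E] [NormedSpace ℝ E]
    {a m : E → ℝ} (ha : ContDiff ℝ (⊤ : ℕ∞) a) (hm : ContDiff ℝ (⊤ : ℕ∞) m) {x : E}
    (h : ∀ j : ℕ, iteratedFDeriv ℝ j m x = 0) (j : ℕ) :
    iteratedFDeriv ℝ j (fun y => a y * m y) x = 0 := by
  rw [← norm_le_zero_iff]
  have H := norm_iteratedFDeriv_mul_le (𝕜 := ℝ) ha hm x (n := j)
    (by exact_mod_cast le_top)
  refine H.trans (le_of_eq ?_)
  apply Finset.sum_eq_zero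
  intro i _
  rw [h (j - i)]
  simp

/-- `FlatOn n X f` says `f ∈ m_X^∞`: all iterated derivatives of `f` vanish at every point
of `X`. -/
def FlatOn (n : ℕ) (X : Set (Fin n → ℝ)) (f : SmoothAlg n) : Prop :=
  ∀ (k : ℕ), ∀ x ∈ X, iteratedFDeriv ℝ k (f : (Fin n → ℝ) → ℝ) x = 0



lemma smoothAlg_contDiff {n : ℕ} (h : SmoothAlg n) :
    ContDiff ℝ (⊤ : ℕ∞) (h : (Fin n → ℝ) → ℝ) := h.2

set_option maxHeartbeats 1000000 in
set_option synthInstance.maxHeartbeats 400000 in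
/-- Anything in the span of the flat functions is flat. -/
lemma flat_of_mem_span {n : ℕ} {X : Set (Fin n → ℝ)} {z : SmoothAlg n}
    (hz : z ∈ Ideal.span {h : SmoothAlg n | FlatOn n X h}) : FlatOn n X z := by
  refine Submodule.span_induction (fun x hx => hx) ?_ ?_ ?_ hz
  · intro j x hx
    show iteratedFDeriv ℝ j ((0 : SmoothAlg n) : (Fin n → ℝ) → ℝ) x = 0
    have : ((0 : SmoothAlg n) : (Fin n → ℝ) → ℝ) = fun _ => (0 : ℝ) := rfl
    rw [this, iteratedFDeriv_zero_fun]
    rfl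
  · intro a b _ _ ha hb j x hx
    have hca : ContDiff ℝ (⊤ : ℕ∞) (a : (Fin n → ℝ) → ℝ) := a.2
    have hcb : ContDiff ℝ (⊤ : ℕ∞) (b : (Fin n → ℝ) → ℝ) := b.2
    have : ((a + b : SmoothAlg n) : (Fin n → ℝ) → ℝ)
        = fun y => (a : (Fin n → ℝ) → ℝ) y + (b : (Fin n → ℝ) → ℝ) y := rfl
    rw [this, iteratedFDeriv_add_apply' (hca.of_le (by exact_mod_cast le_top)).contDiffAt
      (hcb.of_le (by exact_mod_cast le_top)).contDiffAt, ha j x hx, hb j x hx, add_zero]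
  · intro c a _ ha j x hx
    have : (((c • a : SmoothAlg n) : SmoothAlg n) : (Fin n → ℝ) → ℝ)
        = fun y => (c : (Fin n → ℝ) → ℝ) y * (a : (Fin n → ℝ) → ℝ) y := rfl
    rw [this]
    exact flat_mul_aux c.2 a.2 (fun j => ha j x hx) j

set_option maxHeartbeats 2000000 in
set_option synthInstance.maxHeartbeats 400000 in
/-- For closed `X ⊆ ℝ^n` and `g 0, …, g (k-1) ∈ C^∞(ℝ^n)`, the ("good") ideal generated by
`g 0, …, g (k-1)` together with `m_X^∞` is germ-determined. -/
theorem good_ideal_germ_determined (n k : ℕ) (X : Set (Fin n → ℝ)) (hX : IsClosed X)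
    (g : Fin k → SmoothAlg n) (f : SmoothAlg n)
    (hf : ∀ p : Fin n → ℝ,
        ∃ h ∈ Ideal.span (Set.range g ∪ {h : SmoothAlg n | FlatOn n X h}),
          ∀ᶠ x in nhds p, (f : (Fin n → ℝ) → ℝ) x = (h : (Fin n → ℝ) → ℝ) x) :
    f ∈ Ideal.span (Set.range g ∪ {h : SmoothAlg n | FlatOn n X h}) := by
  classical
  -- Step 1: local decompositions
  have hdec : ∀ p : Fin n → ℝ, ∃ U : Set (Fin n → ℝ), IsOpen U ∧ p ∈ U ∧
      ∃ c : Fin k → SmoothAlg n, ∃ m : SmoothAlg n, FlatOn n X m ∧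
        ∀ x ∈ U, (f : (Fin n → ℝ) → ℝ) x
          = ∑ i, (c i : (Fin n → ℝ) → ℝ) x * (g i : (Fin n → ℝ) → ℝ) x
            + (m : (Fin n → ℝ) → ℝ) x := by
    intro p
    obtain ⟨h, hmem, hev⟩ := hf p
    rw [Ideal.span_union, Submodule.mem_sup] at hmem
    obtain ⟨y, hy, z, hz, hyz⟩ := hmem
    rw [Ideal.span, Submodule.mem_span_range_iff_exists_fun] at hy
    obtain ⟨c, hc⟩ := hy
    obtain ⟨U, hUsub, hUo, hpU⟩ := mem_nhds_iff.mp hev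
    refine ⟨U, hUo, hpU, c, z, flat_of_mem_span hz, ?_⟩
    intro x hx
    have hfx : (f : (Fin n → ℝ) → ℝ) x = (h : (Fin n → ℝ) → ℝ) x := hUsub hx
    rw [hfx, ← hyz, ← hc]
    have : (((∑ i, c i • g i) + z : SmoothAlg n) : (Fin n → ℝ) → ℝ)
        = (∑ i, (c i : (Fin n → ℝ) → ℝ) * (g i : (Fin n → ℝ) → ℝ))
          + (z : (Fin n → ℝ) → ℝ) := by
      push_cast
      rfl
    rw [this]
    simp [Finset.sum_apply]
  choose U hUo hpU c m hmflat heq using hdec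
  -- Step 2: partition of unity
  obtain ⟨ρ, hρ⟩ := SmoothPartitionOfUnity.exists_isSubordinate
    (I := 𝓘(ℝ, Fin n → ℝ)) (M := Fin n → ℝ) isClosed_univ U hUo
    (fun x _ => mem_iUnion.2 ⟨x, hpU x⟩)
  -- Step 3: the glued coefficients
  set Cf : Fin k → (Fin n → ℝ) → ℝ :=
    fun i x => ∑ᶠ p, ρ p x • (c p i : (Fin n → ℝ) → ℝ) x with hCf
  have hCs : ∀ i, ContDiff ℝ (⊤ : ℕ∞) (Cf i) := by
    intro i
    exact (hρ.contMDiff_finsum_smul (n := (⊤ : ℕ∞)) hUo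
      (fun p => ((smoothAlg_contDiff (c p i)).contDiffOn).contMDiffOn)).contDiff
  set Mf : (Fin n → ℝ) → ℝ :=
    fun x => ∑ᶠ p, ρ p x • (m p : (Fin n → ℝ) → ℝ) x with hMf
  have hMs : ContDiff ℝ (⊤ : ℕ∞) Mf := by
    exact (hρ.contMDiff_finsum_smul (n := (⊤ : ℕ∞)) hUo
      (fun p => ((smoothAlg_contDiff (m p)).contDiffOn).contMDiffOn)).contDiff
  -- Step 4: the glued flat part is flat
  have hMflat : ∀ (j : ℕ), ∀ x ∈ X, iteratedFDeriv ℝ j Mf x = 0 := by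
    intro j x hx
    obtain ⟨V, hV, hVfin⟩ := ρ.locallyFinite x
    have hev : Mf =ᶠ[nhds x]
        (fun y => ∑ p ∈ hVfin.toFinset, ρ p y • (m p : (Fin n → ℝ) → ℝ) y) := by
      filter_upwards [hV] with y hy
      apply finsum_eq_sum_of_support_subset
      intro p hp
      have hρp : ρ p y ≠ 0 := by
        intro h0
        apply hp
        simp [h0]
      simp only [Finset.coe_sort_coe, Set.Finite.coe_toFinset, Set.mem_setOf_eq]
      exact ⟨y, hρp, hy⟩
    rw [iteratedFDeriv_congr_ev hev j]
    have hterm : ∀ p, ContDiff ℝ (j : ℕ∞)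
        (fun y => ρ p y • (m p : (Fin n → ℝ) → ℝ) y) := by
      intro p
      exact (((ρ p).contMDiff.contDiff.of_le (by exact_mod_cast le_top)).smul
        ((smoothAlg_contDiff (m p)).of_le (by exact_mod_cast le_top)))
    have := iteratedFDeriv_sum (𝕜 := ℝ) (u := hVfin.toFinset)
      (f := fun p => (fun y => ρ p y • (m p : (Fin n → ℝ) → ℝ) y)) (i := j)
      (fun p _ => by exact_mod_cast hterm p)
    have h3 := congrFun this x
    rw [Finset.sum_apply] at h3
    refine Eq.trans h3 (Finset.sum_eq_zero ?_)
    intro p _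
    exact flat_mul_aux (ρ p).contMDiff.contDiff (smoothAlg_contDiff (m p))
      (fun j' => hmflat p j' x hx) j
  -- Step 5: pointwise identity
  have key : ∀ x, (f : (Fin n → ℝ) → ℝ) x
      = ∑ i, Cf i x * (g i : (Fin n → ℝ) → ℝ) x + Mf x := by
    intro x
    have hfs : (support fun p => ρ p x).Finite := ρ.locallyFinite.point_finite x
    have hsub : ∀ (F : (Fin n → ℝ) → ℝ), (∀ p, ρ p x = 0 → F p = 0) →
        (support F).Finite := by
      intro F hF
      refine hfs.subset fun p hp => ?_
      intro h0
      exact hp (hF p h0)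
    have hsupp : ∀ p, ρ p x ≠ 0 → x ∈ U p := fun p hp =>
      hρ p (subset_tsupport _ hp)
    calc (f : (Fin n → ℝ) → ℝ) x
        = (∑ᶠ p, ρ p x) * (f : (Fin n → ℝ) → ℝ) x := by
          rw [ρ.sum_eq_one (mem_univ x), one_mul]
      _ = ∑ᶠ p, ρ p x * (f : (Fin n → ℝ) → ℝ) x := finsum_mul _ _
      _ = ∑ᶠ p, ρ p x * (∑ i, (c p i : (Fin n → ℝ) → ℝ) x * (g i : (Fin n → ℝ) → ℝ) x
            + (m p : (Fin n → ℝ) → ℝ) x) := by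
          apply finsum_congr
          intro p
          by_cases hp : ρ p x = 0
          · simp [hp]
          · rw [heq p x (hsupp p hp)]
      _ = ∑ᶠ p, ((∑ i, ρ p x * ((c p i : (Fin n → ℝ) → ℝ) x * (g i : (Fin n → ℝ) → ℝ) x))
            + ρ p x * (m p : (Fin n → ℝ) → ℝ) x) := by
          apply finsum_congr
          intro p
          rw [mul_add, Finset.mul_sum]
      _ = (∑ᶠ p, ∑ i, ρ p x * ((c p i : (Fin n → ℝ) → ℝ) x * (g i : (Fin n → ℝ) → ℝ) x))
            + ∑ᶠ p, ρ p x * (m p : (Fin n → ℝ) → ℝ) x := by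
          apply finsum_add_distrib
          · apply hsub
            intro p h0
            simp [h0]
          · apply hsub
            intro p h0
            simp [h0]
      _ = (∑ i, ∑ᶠ p, ρ p x * ((c p i : (Fin n → ℝ) → ℝ) x * (g i : (Fin n → ℝ) → ℝ) x))
            + Mf x := by
          congr 1
          exact finsum_sum_comm Finset.univ _
            (fun i _ => hsub _ (fun p h0 => by simp [h0]))
      _ = ∑ i, Cf i x * (g i : (Fin n → ℝ) → ℝ) x + Mf x := by
          congr 1
          apply Finset.sum_congr rfl
          intro i _
          have h1 : ∑ᶠ p, ρ p x * ((c p i : (Fin n → ℝ) → ℝ) x * (g i : (Fin n → ℝ) → ℝ) x)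
              = ∑ᶠ p, (ρ p x * (c p i : (Fin n → ℝ) → ℝ) x) * (g i : (Fin n → ℝ) → ℝ) x := by
            apply finsum_congr
            intro p
            rw [mul_assoc]
          rw [h1, ← finsum_mul _ _]
          rfl
  -- Step 6: assemble
  set Cs : Fin k → SmoothAlg n := fun i => ⟨Cf i, hCs i⟩ with hCsdef
  set Ms : SmoothAlg n := ⟨Mf, hMs⟩ with hMsdef
  have hfeq : f = (∑ i, Cs i * g i) + Ms := by
    apply Subtype.ext
    funext x
    have hco : (((∑ i, Cs i * g i) + Ms : SmoothAlg n) : (Fin n → ℝ) → ℝ)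
        = (∑ i, (Cs i : (Fin n → ℝ) → ℝ) * (g i : (Fin n → ℝ) → ℝ))
          + (Ms : (Fin n → ℝ) → ℝ) := by
      push_cast
      rfl
    show (f : (Fin n → ℝ) → ℝ) x = _
    rw [hco]
    simpa [Finset.sum_apply] using key x
  rw [hfeq]
  refine Submodule.add_mem _ ?_ ?_
  · refine Ideal.sum_mem _ fun i _ => Ideal.mul_mem_left _ _ ?_
    exact Ideal.subset_span (Or.inl ⟨i, rfl⟩)
  · exact Ideal.subset_span (Or.inr hMflat)
end
end

section
/- An ideal I of C∞(ℝ^n) is germ-determined if and only if it is closed under locally finite sums; that is, if and only if for every locally finite family (c_a)_{a∈A} of elements of I, the pointwise sum c : ℝ^n → ℝ, c(x) = Σ_{a∈A} c_a(x) (which is a well-defined smooth function, since near every point only finitely many terms are nonzero), again belongs to I. -/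
noncomputable section

/-- An ideal `I` of `C^∞(ℝ^n)` is germ-determined: any `f` agreeing with an element of `I`
near each point of `ℝ^n` lies in `I`. -/
def GermDetermined (n : ℕ) (I : Ideal (SmoothAlg n)) : Prop :=
  ∀ f : SmoothAlg n,
    (∀ p : Fin n → ℝ, ∃ g ∈ I,
        ∀ᶠ x in nhds p, (f : (Fin n → ℝ) → ℝ) x = (g : (Fin n → ℝ) → ℝ) x) →
    f ∈ I

/-- An ideal of `C^∞(ℝ^n)` is germ-determined if and only if it is closed under locally
finite sums: for every locally finite family `(c a)_{a : A}` of elements of `I` (meaning each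
point has a neighbourhood on which all but finitely many `c a` vanish identically), the
pointwise sum, as a smooth function, again lies in `I`. -/
theorem germ_determined_iff_closed_under_locally_finite_sums (n : ℕ) (I : Ideal (SmoothAlg n)) :
    GermDetermined n I ↔
      ∀ (A : Type) (c : A → SmoothAlg n), (∀ a, c a ∈ I) →
        (∀ p : Fin n → ℝ, ∃ U ∈ nhds p,
            {a : A | ¬ ∀ x ∈ U, (c a : (Fin n → ℝ) → ℝ) x = 0}.Finite) →
        ∀ f : SmoothAlg n,
          (∀ x : Fin n → ℝ, (f : (Fin n → ℝ) → ℝ) x = ∑ᶠ a : A, (c a : (Fin n → ℝ) → ℝ) x) →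
          f ∈ I := by
  constructor
  · -- germ-determined ⇒ closed under locally finite sums
    intro hGD A c hcI hlf f hf
    apply hGD f
    intro p
    obtain ⟨U, hU, hfin⟩ := hlf p
    refine ⟨∑ a ∈ hfin.toFinset, c a, Ideal.sum_mem I (fun a _ => hcI a), ?_⟩
    filter_upwards [hU] with x hx
    rw [hf x]
    have hcoe : ((∑ a ∈ hfin.toFinset, c a : SmoothAlg n) : (Fin n → ℝ) → ℝ) x
        = ∑ a ∈ hfin.toFinset, (c a : (Fin n → ℝ) → ℝ) x := by
      simp
    rw [hcoe]
    refine finsum_eq_sum_of_support_subset _ ?_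
    intro a ha
    simp only [Function.mem_support] at ha
    simp only [Finset.coe_sort_coe, Set.Finite.coe_toFinset, Set.mem_setOf_eq]
    intro h0
    exact ha (h0 x hx)
  · -- closed under locally finite sums ⇒ germ-determined
    intro h f hf
    choose g hgI hg using hf
    have hV : ∀ p : Fin n → ℝ, ∃ V : Set (Fin n → ℝ), IsOpen V ∧ p ∈ V ∧
        ∀ x ∈ V, (f : (Fin n → ℝ) → ℝ) x = (g p : (Fin n → ℝ) → ℝ) x := by
      intro p
      obtain ⟨V, hVeq, hVo, hpV⟩ := eventually_nhds_iff.1 (hg p)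
      exact ⟨V, hVo, hpV, hVeq⟩
    choose V hVo hpV hVeq using hV
    obtain ⟨ρ, hρ⟩ := SmoothPartitionOfUnity.exists_isSubordinate
      (modelWithCornersSelf ℝ (Fin n → ℝ)) isClosed_univ V hVo
      (fun x _ => Set.mem_iUnion.2 ⟨x, hpV x⟩)
    have hsm : ∀ a, ContDiff ℝ (⊤ : ℕ∞) (ρ a : (Fin n → ℝ) → ℝ) := by
      intro a
      have := (ρ a).contMDiff
      rwa [contMDiff_iff_contDiff] at this
    set c : (Fin n → ℝ) → SmoothAlg n :=
      fun a => (⟨(ρ a : (Fin n → ℝ) → ℝ), hsm a⟩ : SmoothAlg n) * g a with hc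
    have hcval : ∀ a x, (c a : (Fin n → ℝ) → ℝ) x = ρ a x * (g a : (Fin n → ℝ) → ℝ) x := by
      intro a x
      simp [hc]
    have key : ∀ a x, (c a : (Fin n → ℝ) → ℝ) x = ρ a x * (f : (Fin n → ℝ) → ℝ) x := by
      intro a x
      rw [hcval]
      by_cases hx : ρ a x = 0
      · simp [hx]
      · have hxV : x ∈ V a := hρ a (subset_tsupport _ (Function.mem_support.2 hx))
        rw [hVeq a x hxV]
    refine h _ c (fun a => Ideal.mul_mem_left _ _ (hgI a)) ?_ f ?_
    · intro p
      obtain ⟨U, hU, hfin⟩ := ρ.locallyFinite p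
      refine ⟨U, hU, hfin.subset ?_⟩
      intro a ha
      simp only [Set.mem_setOf_eq] at ha ⊢
      push_neg at ha
      obtain ⟨x, hxU, hx⟩ := ha
      refine ⟨x, Function.mem_support.2 ?_, hxU⟩
      intro h0
      exact hx (by rw [hcval, h0, zero_mul])
    · intro x
      have hsupp : (Function.support fun a => ρ a x).Finite := by
        exact ρ.locallyFinite.point_finite x
      calc (f : (Fin n → ℝ) → ℝ) x
          = (∑ᶠ a, ρ a x) * (f : (Fin n → ℝ) → ℝ) x := by
            rw [ρ.sum_eq_one (Set.mem_univ x), one_mul]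
        _ = ∑ᶠ a, ρ a x * (f : (Fin n → ℝ) → ℝ) x := finsum_mul _ _
        _ = ∑ᶠ a, (c a : (Fin n → ℝ) → ℝ) x := by
            exact finsum_congr fun a => (key a x).symm
end
end

section
/- Let L be the ideal of C∞(ℝ²) generated by the set of functions {(x,y) ↦ g(y) : g ∈ C∞(ℝ), g vanishes identically on some neighbourhood of 0 in ℝ}. Then L is not germ-determined: there exists f ∈ C∞(ℝ²) with f ∉ L such that for every p ∈ ℝ² there exists h ∈ L with f = h on some neighbourhood of p. (For instance, any smooth f with f(x,y) = 0 if and only if |xy| ≤ 1 has these properties.) -/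
noncomputable section

/-- Generators of the ideal `L ⊆ C^∞(ℝ²)`: functions `(x,y) ↦ g(y)` where `g ∈ C^∞(ℝ)`
vanishes identically near `0`. -/
def LGens : Set (SmoothAlg 2) :=
  {F | ∃ g : SmoothAlg 1, (∀ᶠ t in nhds (0 : Fin 1 → ℝ), (g : (Fin 1 → ℝ) → ℝ) t = 0) ∧
    ∀ x : Fin 2 → ℝ, (F : (Fin 2 → ℝ) → ℝ) x = (g : (Fin 1 → ℝ) → ℝ) (fun _ => x 1)}

set_option synthInstance.maxHeartbeats 400000 in
/-- Every element of the span of `LGens` vanishes on a strip `|y| < ε`. -/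
lemma strip_vanish {h : SmoothAlg 2} (hh : h ∈ Ideal.span LGens) :
    ∃ ε > (0 : ℝ), ∀ x : Fin 2 → ℝ, |x 1| < ε → (h : (Fin 2 → ℝ) → ℝ) x = 0 := by
  refine Submodule.span_induction (p := fun (h : SmoothAlg 2) (_ : h ∈ Ideal.span LGens) =>
      ∃ ε > (0 : ℝ), ∀ x : Fin 2 → ℝ, |x 1| < ε → (h : (Fin 2 → ℝ) → ℝ) x = 0)
    ?_ ?_ ?_ ?_ hh
  · rintro F ⟨g, hg0, hFg⟩
    have hc : Continuous (fun (y : ℝ) (_ : Fin 1) => y) := continuous_pi fun _ => continuous_id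
    have h0 : Filter.Tendsto (fun (y : ℝ) (_ : Fin 1) => y) (nhds 0) (nhds (0 : Fin 1 → ℝ)) := by
      exact hc.tendsto 0
    have := h0.eventually hg0
    rw [Metric.eventually_nhds_iff] at this
    obtain ⟨ε, hε, hball⟩ := this
    refine ⟨ε, hε, fun x hx => ?_⟩
    rw [hFg x]
    exact hball (by simpa [Real.dist_eq] using hx)
  · exact ⟨1, one_pos, fun x _ => rfl⟩
  · rintro a b _ _ ⟨ε, hε, ha⟩ ⟨δ, hδ, hb⟩
    refine ⟨min ε δ, lt_min hε hδ, fun x hx => ?_⟩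
    have : ((a + b : SmoothAlg 2) : (Fin 2 → ℝ) → ℝ) x
        = (a : (Fin 2 → ℝ) → ℝ) x + (b : (Fin 2 → ℝ) → ℝ) x := rfl
    rw [this, ha x (lt_of_lt_of_le hx (min_le_left _ _)),
      hb x (lt_of_lt_of_le hx (min_le_right _ _)), add_zero]
  · rintro c a _ ⟨ε, hε, ha⟩
    refine ⟨ε, hε, fun x hx => ?_⟩
    have : ((c • a : SmoothAlg 2) : (Fin 2 → ℝ) → ℝ) x
        = (c : (Fin 2 → ℝ) → ℝ) x * (a : (Fin 2 → ℝ) → ℝ) x := rfl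
    rw [this, ha x hx, mul_zero]

/-- Any smooth `f` with zero set `{|xy| ≤ 1}` witnesses failure of germ-determinedness. -/
lemma key (f : SmoothAlg 2)
    (hf : ∀ x : Fin 2 → ℝ, (f : (Fin 2 → ℝ) → ℝ) x = 0 ↔ |x 0 * x 1| ≤ 1) :
    f ∉ Ideal.span LGens ∧
      ∀ p : Fin 2 → ℝ, ∃ h ∈ Ideal.span LGens,
        ∀ᶠ x in nhds p, (f : (Fin 2 → ℝ) → ℝ) x = (h : (Fin 2 → ℝ) → ℝ) x := by
  constructor
  · intro hmem
    obtain ⟨ε, hε, hv⟩ := strip_vanish hmem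
    set x : Fin 2 → ℝ := ![4 / ε, ε / 2] with hx
    have hx0 : x 0 = 4 / ε := rfl
    have hx1 : x 1 = ε / 2 := rfl
    have h1 : (f : (Fin 2 → ℝ) → ℝ) x = 0 := by
      apply hv
      rw [hx1, abs_of_pos (by linarith)]
      linarith
    rw [hf x, hx0, hx1] at h1
    have : (4 / ε) * (ε / 2) = 2 := by field_simp; ring
    rw [this] at h1
    rw [abs_of_pos (by norm_num : (0:ℝ) < 2)] at h1
    linarith
  · intro p
    by_cases hp : p 1 = 0
    · -- near p, f vanishes; take h = 0
      refine ⟨0, Ideal.zero_mem _, ?_⟩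
      have h0 : Filter.Tendsto (fun x : Fin 2 → ℝ => x 0) (nhds p) (nhds (p 0)) :=
        (continuous_apply 0).tendsto p
      have h1 : Filter.Tendsto (fun x : Fin 2 → ℝ => x 1) (nhds p) (nhds (0 : ℝ)) := by
        simpa [hp] using (continuous_apply 1).tendsto p
      have e0 : ∀ᶠ x in nhds p, |x 0| < |p 0| + 1 := by
        have : ∀ᶠ y in nhds (p 0), |y| < |p 0| + 1 :=
          (continuous_abs.tendsto (p 0)).eventually_lt_const (by linarith [abs_nonneg (p 0)])
        exact h0.eventually this
      have e1 : ∀ᶠ x in nhds p, |x 1| < 1 / (|p 0| + 1) := by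
        have : ∀ᶠ y in nhds (0 : ℝ), |y| < 1 / (|p 0| + 1) := by
          have := (continuous_abs.tendsto (0 : ℝ)).eventually_lt_const
            (show |(0:ℝ)| < 1 / (|p 0| + 1) by
              simp; positivity)
          exact this
        exact h1.eventually this
      filter_upwards [e0, e1] with x hx0 hx1
      have hpos : (0:ℝ) < |p 0| + 1 := by positivity
      have : |x 0 * x 1| ≤ 1 := by
        rw [abs_mul]
        calc |x 0| * |x 1| ≤ (|p 0| + 1) * (1 / (|p 0| + 1)) := by
              apply mul_le_mul hx0.le hx1.le (abs_nonneg _) (by positivity)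
          _ = 1 := by field_simp
      rw [(hf x).2 this]
      rfl
    · -- p 1 ≠ 0 : multiply by a bump function in y equal to 1 near p 1, 0 near 0
      have hp' : 0 < |p 1| := abs_pos.2 hp
      set b : ContDiffBump (p 1) :=
        ⟨|p 1| / 4, |p 1| / 2, by positivity, by linarith⟩ with hb
      have hgsm : ContDiff ℝ (⊤ : ℕ∞) (fun t : Fin 1 → ℝ => b (t 0)) := by
        exact b.contDiff.comp ((ContinuousLinearMap.proj (R := ℝ)
          (φ := fun _ : Fin 1 => ℝ) 0).contDiff)
      set g : SmoothAlg 1 := ⟨fun t => b (t 0), hgsm⟩ with hg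
      have hGsm : ContDiff ℝ (⊤ : ℕ∞) (fun x : Fin 2 → ℝ => b (x 1)) := by
        exact b.contDiff.comp ((ContinuousLinearMap.proj (R := ℝ)
          (φ := fun _ : Fin 2 => ℝ) 1).contDiff)
      set G : SmoothAlg 2 := ⟨fun x => b (x 1), hGsm⟩ with hG
      have hGmem : G ∈ LGens := by
        refine ⟨g, ?_, fun x => rfl⟩
        -- g vanishes near 0
        have h1 : Filter.Tendsto (fun t : Fin 1 → ℝ => t 0) (nhds (0 : Fin 1 → ℝ))
            (nhds (0 : ℝ)) := by exact (continuous_apply (0 : Fin 1)).tendsto 0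
        have : ∀ᶠ y in nhds (0 : ℝ), b y = 0 := by
          have hopen : IsOpen {y : ℝ | b.rOut < dist y (p 1)} :=
            isOpen_lt continuous_const (continuous_id.dist continuous_const)
        -- 0 belongs to this open set
          have h0mem : (0 : ℝ) ∈ {y : ℝ | b.rOut < dist y (p 1)} := by
            simp only [Set.mem_setOf_eq, Real.dist_eq, zero_sub, abs_neg, hb]
            linarith
          filter_upwards [hopen.mem_nhds h0mem] with y hy
          exact b.zero_of_le_dist hy.le
        exact h1.eventually this
      refine ⟨f * G, Ideal.mul_mem_left _ f (Ideal.subset_span hGmem), ?_⟩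
      have h1 : Filter.Tendsto (fun x : Fin 2 → ℝ => x 1) (nhds p) (nhds (p 1)) :=
        (continuous_apply 1).tendsto p
      have hone : ∀ᶠ x in nhds p, b (x 1) = 1 := h1.eventually b.eventuallyEq_one
      filter_upwards [hone] with x hx
      have : ((f * G : SmoothAlg 2) : (Fin 2 → ℝ) → ℝ) x
          = (f : (Fin 2 → ℝ) → ℝ) x * b (x 1) := rfl
      rw [this, hx, mul_one]

/-- The ideal `L` of `C^∞(ℝ²)` generated by the functions `(x,y) ↦ g(y)`, `g` vanishing near
`0`, is not germ-determined: there is `f ∉ L` which agrees with an element of `L` near every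
point; indeed any smooth `f` with `f(x,y) = 0 ↔ |xy| ≤ 1` is such a function. -/
theorem span_LGens_not_germ_determined :
    (∃ f : SmoothAlg 2, f ∉ Ideal.span LGens ∧
        ∀ p : Fin 2 → ℝ, ∃ h ∈ Ideal.span LGens,
          ∀ᶠ x in nhds p, (f : (Fin 2 → ℝ) → ℝ) x = (h : (Fin 2 → ℝ) → ℝ) x) ∧
    ∀ f : SmoothAlg 2, (∀ x : Fin 2 → ℝ, (f : (Fin 2 → ℝ) → ℝ) x = 0 ↔ |x 0 * x 1| ≤ 1) →
      f ∉ Ideal.span LGens ∧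
        ∀ p : Fin 2 → ℝ, ∃ h ∈ Ideal.span LGens,
          ∀ᶠ x in nhds p, (f : (Fin 2 → ℝ) → ℝ) x = (h : (Fin 2 → ℝ) → ℝ) x := by
  have hFsm : ContDiff ℝ (⊤ : ℕ∞) (fun x : Fin 2 → ℝ =>
      expNegInvGlue ((x 0 * x 1) ^ 2 - 1)) := by
    apply expNegInvGlue.contDiff.comp
    have h0 : ContDiff ℝ (⊤ : ℕ∞) (fun x : Fin 2 → ℝ => x 0) :=
      (ContinuousLinearMap.proj (R := ℝ) (φ := fun _ : Fin 2 => ℝ) 0).contDiff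
    have h1 : ContDiff ℝ (⊤ : ℕ∞) (fun x : Fin 2 → ℝ => x 1) :=
      (ContinuousLinearMap.proj (R := ℝ) (φ := fun _ : Fin 2 => ℝ) 1).contDiff
    exact ((h0.mul h1).pow 2).sub contDiff_const
  set F : SmoothAlg 2 := ⟨fun x => expNegInvGlue ((x 0 * x 1) ^ 2 - 1), hFsm⟩ with hF
  have hFprop : ∀ x : Fin 2 → ℝ, (F : (Fin 2 → ℝ) → ℝ) x = 0 ↔ |x 0 * x 1| ≤ 1 := by
    intro x
    have : (F : (Fin 2 → ℝ) → ℝ) x = expNegInvGlue ((x 0 * x 1) ^ 2 - 1) := rfl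
    rw [this, expNegInvGlue.zero_iff_nonpos, sub_nonpos, sq_le_one_iff_abs_le_one]
  exact ⟨⟨F, key F hFprop⟩, key⟩
end
end

section
/- Let η : ℝ → ℝ be a smooth function with η(x) > 0 for x ∈ (0,1) and η(x) = 0 for x ∉ (0,1), and let I be the ideal of C∞(ℝ) generated by the translates x ↦ η(x − a) for a ∈ ℤ (so I consists of the finite sums Σ_{a∈A} g_a(x) η(x−a) with A ⊂ ℤ finite and g_a ∈ C∞(ℝ)). Then the pointwise sum f(x) = Σ_{a∈ℤ} η(x − a) defines a smooth function on ℝ which does not lie in I, although for every p ∈ ℝ there exists h ∈ I with f = h on some neighbourhood of p. Hence I is not germ-determined. -/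
noncomputable section
set_option synthInstance.maxHeartbeats 1000000
set_option maxHeartbeats 1000000

/-- The `ℝ`-algebra `C∞(ℝ)` of smooth functions `ℝ → ℝ`. -/
def SmoothR : Subalgebra ℝ (ℝ → ℝ) where
  carrier := {f | ContDiff ℝ (⊤ : ℕ∞) f}
  mul_mem' := fun {f g} hf hg => by
    simp only [Set.mem_setOf_eq] at *; exact hf.mul hg
  one_mem' := by simp only [Set.mem_setOf_eq]; exact contDiff_const
  add_mem' := fun {f g} hf hg => by
    simp only [Set.mem_setOf_eq] at *; exact hf.add hg
  zero_mem' := by simp only [Set.mem_setOf_eq]; exact contDiff_const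
  algebraMap_mem' := fun r => by
    simp only [Set.mem_setOf_eq]; exact contDiff_const

/-- Let `η : ℝ → ℝ` be smooth, positive exactly on `(0,1)`, and let `I` be the ideal of
`C^∞(ℝ)` generated by the integer translates `x ↦ η(x − a)`, `a ∈ ℤ`. The locally finite sum
`f(x) = Σ_{a∈ℤ} η(x − a)` is a smooth function which does not lie in `I`, although near every
point of `ℝ` it agrees with an element of `I`. Hence `I` is not germ-determined. -/
theorem translate_ideal_not_germ_determined (η : ℝ → ℝ) (hη : ContDiff ℝ (⊤ : ℕ∞) η)
    (hpos : ∀ x ∈ Set.Ioo (0 : ℝ) 1, 0 < η x)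
    (hzero : ∀ x ∉ Set.Ioo (0 : ℝ) 1, η x = 0) :
    ∃ f : SmoothR,
      (∀ x : ℝ, (f : ℝ → ℝ) x = ∑ᶠ a : ℤ, η (x - a)) ∧
      f ∉ Ideal.span {g : SmoothR | ∃ a : ℤ, ∀ x : ℝ, (g : ℝ → ℝ) x = η (x - a)} ∧
      ∀ p : ℝ, ∃ h ∈ Ideal.span {g : SmoothR | ∃ a : ℤ, ∀ x : ℝ, (g : ℝ → ℝ) x = η (x - a)},
        ∀ᶠ x in nhds p, (f : ℝ → ℝ) x = (h : ℝ → ℝ) x := by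
  -- the candidate function
  set F : ℝ → ℝ := fun x => η (Int.fract x) with hFdef
  have trans_smooth : ∀ a : ℤ, ContDiff ℝ (⊤ : ℕ∞) (fun x : ℝ => η (x - (a : ℝ))) :=
    fun a => hη.comp (contDiff_id.sub contDiff_const)
  -- translates as elements of SmoothR
  set g : ℤ → SmoothR := fun a => ⟨fun x : ℝ => η (x - (a : ℝ)), trans_smooth a⟩ with hgdef
  set S : Set SmoothR := {g : SmoothR | ∃ a : ℤ, ∀ x : ℝ, (g : ℝ → ℝ) x = η (x - a)} with hSdef
  have gmem : ∀ a : ℤ, g a ∈ S := fun a => ⟨a, fun x => rfl⟩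
  -- local description of F near any integer n
  have key : ∀ n : ℤ, ∀ x ∈ Set.Ioo ((n : ℝ) - 1) ((n : ℝ) + 1),
      F x = η (x - ((n : ℝ) - 1)) + η (x - (n : ℝ)) := by
    intro n x hx
    obtain ⟨hx1, hx2⟩ := hx
    rcases lt_trichotomy x (n : ℝ) with h | h | h
    · have hfl : ⌊x⌋ = n - 1 := by
        rw [Int.floor_eq_iff]
        constructor <;> push_cast <;> linarith
      have h0 : η (x - (n : ℝ)) = 0 := by
        apply hzero; intro hc; exact absurd hc.1 (by linarith)
      simp only [hFdef, Int.fract, hfl, h0, add_zero]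
      push_cast
      ring_nf
    · have h0 : η (x - ((n : ℝ) - 1)) = 0 := by
        apply hzero; intro hc; exact absurd hc.2 (by rw [h]; norm_num)
      have h1 : η (x - (n : ℝ)) = 0 := by
        apply hzero; intro hc; exact absurd hc.1 (by rw [h]; norm_num)
      have h2 : F x = 0 := by
        simp only [hFdef]
        apply hzero
        intro hc
        have : Int.fract x = 0 := by rw [h]; exact Int.fract_intCast n
        rw [this] at hc; exact absurd hc.1 (by norm_num)
      rw [h2, h0, h1, add_zero]
    · have hfl : ⌊x⌋ = n := by
        rw [Int.floor_eq_iff]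
        constructor <;> push_cast <;> linarith
      have h0 : η (x - ((n : ℝ) - 1)) = 0 := by
        apply hzero; intro hc; exact absurd hc.2 (by linarith)
      simp only [hFdef, Int.fract, hfl, h0, zero_add]
  -- every point lies in such an interval
  have mem_int : ∀ p : ℝ, p ∈ Set.Ioo ((⌊p⌋ : ℝ) - 1) ((⌊p⌋ : ℝ) + 1) := by
    intro p
    constructor
    · have := Int.floor_le p; linarith
    · exact Int.lt_floor_add_one p
  -- F is smooth
  have hFsmooth : ContDiff ℝ (⊤ : ℕ∞) F := by
    rw [contDiff_iff_contDiffAt]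
    intro p
    have hsm : ContDiffAt ℝ (⊤ : ℕ∞)
        (fun x => η (x - ((⌊p⌋ : ℝ) - 1)) + η (x - (⌊p⌋ : ℝ))) p :=
      (((hη.comp (contDiff_id.sub contDiff_const)).add
        (hη.comp (contDiff_id.sub contDiff_const))).contDiffAt)
    refine hsm.congr_of_eventuallyEq ?_
    exact Filter.eventuallyEq_of_mem
      (Ioo_mem_nhds (mem_int p).1 (mem_int p).2) (key ⌊p⌋)
  refine ⟨⟨F, hFsmooth⟩, ?_, ?_, ?_⟩
  · -- F equals the locally finite sum
    intro x
    have hsum : ∑ᶠ a : ℤ, η (x - (a : ℝ)) = η (x - (⌊x⌋ : ℝ)) := by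
      apply finsum_eq_single (fun a : ℤ => η (x - (a : ℝ))) ⌊x⌋
      intro b hb
      apply hzero
      intro hc
      obtain ⟨hc1, hc2⟩ := hc
      rcases lt_or_gt_of_ne hb with h | h
      · have hb1 : (b : ℝ) + 1 ≤ (⌊x⌋ : ℝ) := by exact_mod_cast Int.add_one_le_iff.2 h
        have := Int.floor_le x
        linarith
      · have hb2 : (⌊x⌋ : ℝ) + 1 ≤ (b : ℝ) := by exact_mod_cast Int.add_one_le_iff.2 h
        have := Int.lt_floor_add_one x
        linarith
    rw [hsum]; rfl
  · -- F is not in the ideal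
    intro hmem
    have h12 : (0 : ℝ) < η (1/2) := hpos _ (by norm_num)
    -- every element of the ideal vanishes at b + 1/2 for all large b
    have vanish : ∀ h ∈ Ideal.span S,
        ∃ N : ℤ, ∀ b : ℤ, N ≤ b → (h : ℝ → ℝ) ((b : ℝ) + 1/2) = 0 := by
      intro h hh
      refine Submodule.span_induction ?_ ?_ ?_ ?_ hh
      · rintro x ⟨a, hx⟩
        refine ⟨a + 1, fun b hb => ?_⟩
        rw [hx]
        apply hzero
        intro hc
        have : (a : ℝ) + 1 ≤ (b : ℝ) := by exact_mod_cast hb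
        exact absurd hc.2 (by linarith)
      · exact ⟨0, fun b _ => rfl⟩
      · rintro x y hx hy ⟨N1, h1⟩ ⟨N2, h2⟩
        refine ⟨max N1 N2, fun b hb => ?_⟩
        have : ((x + y : SmoothR) : ℝ → ℝ) ((b:ℝ)+1/2)
            = (x : ℝ → ℝ) ((b:ℝ)+1/2) + (y : ℝ → ℝ) ((b:ℝ)+1/2) := rfl
        rw [this, h1 b (le_trans (le_max_left _ _) hb),
          h2 b (le_trans (le_max_right _ _) hb), add_zero]
      · rintro r x hx ⟨N, hN⟩
        refine ⟨N, fun b hb => ?_⟩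
        have : ((r • x : SmoothR) : ℝ → ℝ) ((b:ℝ)+1/2)
            = (r : ℝ → ℝ) ((b:ℝ)+1/2) * (x : ℝ → ℝ) ((b:ℝ)+1/2) := rfl
        rw [this, hN b hb, mul_zero]
    obtain ⟨N, hN⟩ := vanish _ hmem
    have : F ((N : ℝ) + 1/2) = 0 := hN N le_rfl
    rw [hFdef] at this
    simp only at this
    rw [Int.fract_intCast_add, Int.fract_eq_self.2 (by norm_num)] at this
    exact absurd this (ne_of_gt h12)
  · -- local agreement
    intro p
    set n := ⌊p⌋ with hn
    refine ⟨g (n - 1) + g n, ?_, ?_⟩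
    · exact Ideal.add_mem _ (Ideal.subset_span (gmem _)) (Ideal.subset_span (gmem _))
    · have hco : ∀ x : ℝ, ((g (n-1) + g n : SmoothR) : ℝ → ℝ) x
          = η (x - ((n : ℝ) - 1)) + η (x - (n : ℝ)) := by
        intro x
        have : ((g (n-1) + g n : SmoothR) : ℝ → ℝ) x
            = η (x - ((n - 1 : ℤ) : ℝ)) + η (x - (n : ℝ)) := rfl
        rw [this]; push_cast; ring_nf
      refine Filter.eventuallyEq_of_mem
        (Ioo_mem_nhds (mem_int p).1 (mem_int p).2) ?_
      intro x hx
      show F x = _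
      rw [key n x hx, hco]
end
end

section
/- Let X and Y be smooth manifolds. Then the map sending a smooth map f : X → Y to the ℝ-algebra homomorphism f* : C∞(Y) → C∞(X) defined by f*(g) = g ∘ f is a bijection from the set of smooth maps X → Y onto the set of ℝ-algebra homomorphisms C∞(Y) → C∞(X). -/
open scoped Manifold
noncomputable section

open Set Function

namespace MilnorExercise

variable {e : ℕ} {Y : Type}
    [TopologicalSpace Y] [ChartedSpace (EuclideanSpace ℝ (Fin e)) Y]
    [IsManifold (𝓡 e) (⊤ : ℕ∞) Y] [T2Space Y] [SecondCountableTopology Y]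

include e in
theorem locallyCompact : LocallyCompactSpace Y :=
  ChartedSpace.locallyCompactSpace (EuclideanSpace ℝ (Fin e)) Y

/-- A nonnegative proper smooth function on a manifold. -/
theorem exists_proper :
    ∃ h : ContMDiffMap (𝓡 e) 𝓘(ℝ, ℝ) Y ℝ (⊤ : ℕ∞),
      (∀ y, 0 ≤ h y) ∧ ∀ c : ℝ, IsCompact {y | h y ≤ c} := by
  haveI : LocallyCompactSpace Y := locallyCompact (e := e)
  set K := CompactExhaustion.choice Y with hK
  have hdisj : ∀ n : ℕ, Disjoint (K (n+1)) (interior (K (n+2)))ᶜ := fun n =>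
    disjoint_compl_right_iff_subset.mpr (K.subset_interior_succ (n+1))
  choose f hf0 hf1 hf01 using fun n : ℕ =>
    exists_contMDiffMap_zero_one_of_isClosed (𝓡 e) (K.isCompact (n+1)).isClosed
      isOpen_interior.isClosed_compl (hdisj n)
  have hzero : ∀ (n m : ℕ) (y : Y), y ∈ K m → m ≤ n + 1 → f n y = 0 := by
    intro n m y hy hmn
    exact hf0 n (K.subset hmn hy)
  have hsupp : ∀ n, support (fun y => f n y) ⊆ (K (n+1))ᶜ := by
    intro n y hy
    simp only [mem_compl_iff]
    intro h
    exact hy (hf0 n h)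
  have hlf : LocallyFinite fun n => support (fun y => f n y) := by
    intro y
    obtain ⟨m, hm⟩ := K.exists_mem y
    refine ⟨interior (K (m+1)), isOpen_interior.mem_nhds (K.subset_interior_succ m hm),
      Set.Finite.subset (Set.finite_Iio (m+1)) ?_⟩
    intro n hn
    obtain ⟨z, hz1, hz2⟩ := hn
    simp only [mem_Iio]
    by_contra hc
    push_neg at hc
    have : z ∈ K (n+1) := K.subset (by omega) (interior_subset hz2)
    exact hsupp n hz1 this
  have hsmooth : ContMDiff (𝓡 e) 𝓘(ℝ, ℝ) (⊤ : ℕ∞) (fun y => ∑ᶠ n, f n y) :=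
    contMDiff_finsum (fun n => (f n).contMDiff) hlf
  refine ⟨⟨_, hsmooth⟩, fun y => finsum_nonneg fun n => (hf01 n y).1, fun c => ?_⟩
  have hbound : ∀ (m : ℕ) (y : Y), y ∉ K (m + 2) → (m + 1 : ℝ) ≤ ∑ᶠ n, f n y := by
    intro m y hy
    obtain ⟨M, hM⟩ := K.exists_mem y
    have hMm : m + 2 ≤ M := by
      by_contra hc
      exact hy (K.subset (by omega) hM)
    have heq : ∑ᶠ n, f n y = ∑ n ∈ Finset.range M, f n y := by
      apply finsum_eq_finset_sum_of_support_subset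
      intro n hn
      simp only [Finset.coe_range, mem_Iio]
      by_contra hc
      push_neg at hc
      exact hn (hzero n M y hM (by omega))
    rw [heq]
    calc (m + 1 : ℝ) = ∑ n ∈ Finset.range (m+1), (1:ℝ) := by simp
    _ = ∑ n ∈ Finset.range (m+1), f n y := by
        apply Finset.sum_congr rfl
        intro n hn
        simp only [Finset.mem_range] at hn
        exact (hf1 n (fun h => hy (K.subset (by omega) (interior_subset h)))).symm
    _ ≤ ∑ n ∈ Finset.range M, f n y := by
        apply Finset.sum_le_sum_of_subset_of_nonneg
        · exact Finset.range_subset_range.mpr (by omega)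
        · exact fun n _ _ => (hf01 n y).1
  have hsub : {y | (fun y => ∑ᶠ n, f n y) y ≤ c} ⊆ K (Nat.ceil c + 2) := by
    intro y hy
    by_contra hc
    have h1 := hbound (Nat.ceil c) y hc
    have h2 : (Nat.ceil c : ℝ) + 1 ≤ c := le_trans h1 hy
    have h3 := Nat.le_ceil c
    linarith
  have hcl : IsClosed {y | (fun y => ∑ᶠ n, f n y) y ≤ c} :=
    isClosed_le hsmooth.continuous continuous_const
  exact (K.isCompact _).of_isClosed_subset hcl hsub

/-- Evaluation at the value of an element of a sum etc.: coercion is an algebra hom. -/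
theorem sum_apply {ι : Type*} (t : Finset ι) (p : ι → ContMDiffMap (𝓡 e) 𝓘(ℝ, ℝ) Y ℝ (⊤ : ℕ∞)) (y : Y) :
    (∑ n ∈ t, p n : ContMDiffMap (𝓡 e) 𝓘(ℝ, ℝ) Y ℝ (⊤ : ℕ∞)) y = ∑ n ∈ t, p n y := by
  simp [← ContMDiffMap.coeFnAlgHom_apply, map_sum]

/-- A nowhere-vanishing smooth function has nonzero image under any character. -/
theorem char_ne_zero (G : ContMDiffMap (𝓡 e) 𝓘(ℝ, ℝ) Y ℝ (⊤ : ℕ∞)) (hG : ∀ z, G z ≠ 0)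
    (χ : ContMDiffMap (𝓡 e) 𝓘(ℝ,ℝ) Y ℝ (⊤ : ℕ∞) →ₐ[ℝ] ℝ) : χ G ≠ 0 := by
  have h1 : G * ⟨fun z => (G z)⁻¹, G.contMDiff.inv₀ hG⟩ = 1 := by
    ext z
    change G z * (G z)⁻¹ = 1
    exact mul_inv_cancel₀ (hG z)
  intro h0
  have h2 := congrArg χ h1
  have h3 : χ G * χ _ = χ 1 := (map_mul χ G _).symm.trans h2
  rw [map_one, h0, zero_mul] at h3
  exact zero_ne_one h3

/-- Every character of `C^∞(Y)` is evaluation at a point. -/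
theorem char_eq_eval (χ : ContMDiffMap (𝓡 e) 𝓘(ℝ,ℝ) Y ℝ (⊤ : ℕ∞) →ₐ[ℝ] ℝ) :
    ∃ y : Y, ∀ g : ContMDiffMap (𝓡 e) 𝓘(ℝ,ℝ) Y ℝ (⊤ : ℕ∞), χ g = g y := by
  by_contra hcon
  push_neg at hcon
  obtain ⟨h, hpos, hprop⟩ := exists_proper (e := e) (Y := Y)
  set c := χ h with hc
  -- for each y, a function in ker χ, nonneg, positive at y
  have key : ∀ y : Y, ∃ p : ContMDiffMap (𝓡 e) 𝓘(ℝ,ℝ) Y ℝ (⊤ : ℕ∞),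
      χ p = 0 ∧ (∀ z, 0 ≤ p z) ∧ 0 < p y := by
    intro y
    obtain ⟨g, hg⟩ := hcon y
    refine ⟨(g - algebraMap ℝ _ (χ g))^2, ?_, fun z => ?_, ?_⟩
    · rw [map_pow, map_sub, AlgHom.commutes]
      simp
    · show (0:ℝ) ≤ ((g - algebraMap ℝ _ (χ g))^2 : ContMDiffMap (𝓡 e) 𝓘(ℝ,ℝ) Y ℝ (⊤ : ℕ∞)) z
      rw [ContMDiffMap.coe_pow, ContMDiffMap.coe_sub]
      exact sq_nonneg _
    · show (0:ℝ) < ((g - algebraMap ℝ _ (χ g))^2 : ContMDiffMap (𝓡 e) 𝓘(ℝ,ℝ) Y ℝ (⊤ : ℕ∞)) y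
      rw [ContMDiffMap.coe_pow, ContMDiffMap.coe_sub]
      have hne : g y - χ g ≠ 0 := sub_ne_zero.mpr (Ne.symm hg)
      have hlt : (0:ℝ) < (g y - χ g)^2 := by positivity
      exact hlt
  choose p hp0 hpnn hppos using key
  set Kc := {y : Y | h y ≤ c + 1} with hKc
  have hKcc : IsCompact Kc := hprop (c+1)
  have hcover : Kc ⊆ ⋃ y : Y, {z | 0 < p y z} := fun z _ =>
    mem_iUnion.mpr ⟨z, hppos z⟩
  obtain ⟨t, ht⟩ := hKcc.elim_finite_subcover (fun y : Y => {z | 0 < p y z})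
    (fun y => isOpen_lt continuous_const (p y).contMDiff.continuous) hcover
  set G : ContMDiffMap (𝓡 e) 𝓘(ℝ,ℝ) Y ℝ (⊤ : ℕ∞) :=
    (h - algebraMap ℝ _ c)^2 + ∑ y ∈ t, p y with hG
  have hGval : ∀ z, G z = (h z - c)^2 + ∑ y ∈ t, p y z := by
    intro z
    rw [hG]
    rw [ContMDiffMap.coe_add, Pi.add_apply, ContMDiffMap.coe_pow, ContMDiffMap.coe_sub, Pi.pow_apply,
      Pi.sub_apply, sum_apply]
    rfl
  have hGpos : ∀ z, 0 < G z := by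
    intro z
    rw [hGval]
    by_cases hz : z ∈ Kc
    · obtain ⟨y, hyt, hy⟩ := by
        have := ht hz
        simpa using this
      have hsum : 0 < ∑ y ∈ t, p y z :=
        Finset.sum_pos' (fun i _ => hpnn i z) ⟨y, hyt, hy⟩
      have := sq_nonneg (h z - c)
      linarith
    · have hz' : c + 1 < h z := by
        simp only [hKc, mem_setOf_eq, not_le] at hz
        exact hz
      have h1 : (1:ℝ) ≤ (h z - c)^2 := by nlinarith
      have h2 : 0 ≤ ∑ y ∈ t, p y z := Finset.sum_nonneg (fun i _ => hpnn i z)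
      linarith
  have hchiG : χ G = 0 := by
    rw [hG, map_add, map_pow, map_sub, AlgHom.commutes, map_sum]
    simp [hp0, hc]
  exact char_ne_zero G (fun z => (hGpos z).ne') χ hchiG
/-- Smooth functions separate points. -/
theorem eval_inj {y₁ y₂ : Y}
    (h : ∀ g : ContMDiffMap (𝓡 e) 𝓘(ℝ,ℝ) Y ℝ (⊤ : ℕ∞), g y₁ = g y₂) : y₁ = y₂ := by
  haveI : LocallyCompactSpace Y := locallyCompact (e := e)
  by_contra hne
  obtain ⟨g, h0, h1, -⟩ := exists_contMDiffMap_zero_one_of_isClosed (𝓡 e)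
    (isClosed_singleton (x := y₁)) (isClosed_singleton (x := y₂)) (by simpa using hne)
  have := h g
  rw [h0 rfl, h1 rfl] at this
  exact zero_ne_one this

end MilnorExercise

/-- For smooth manifolds `X`, `Y`, the assignment `f ↦ f^*` (where `f^*(g) = g ∘ f`) is a
bijection from smooth maps `X → Y` to `ℝ`-algebra homomorphisms `C^∞(Y) → C^∞(X)`:
every `ℝ`-algebra homomorphism `φ : C^∞(Y) → C^∞(X)` equals `f^*` for a unique smooth map
`f : X → Y`. -/
theorem smooth_maps_biject_with_algHoms
    {d e : ℕ} {X Y : Type}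
    [TopologicalSpace X] [ChartedSpace (EuclideanSpace ℝ (Fin d)) X]
    [IsManifold (𝓡 d) (⊤ : ℕ∞) X] [T2Space X] [SecondCountableTopology X]
    [TopologicalSpace Y] [ChartedSpace (EuclideanSpace ℝ (Fin e)) Y]
    [IsManifold (𝓡 e) (⊤ : ℕ∞) Y] [T2Space Y] [SecondCountableTopology Y]
    (φ : ContMDiffMap (𝓡 e) 𝓘(ℝ, ℝ) Y ℝ (⊤ : ℕ∞) →ₐ[ℝ] ContMDiffMap (𝓡 d) 𝓘(ℝ, ℝ) X ℝ (⊤ : ℕ∞)) :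
    ∃! f : ContMDiffMap (𝓡 d) (𝓡 e) X Y (⊤ : ℕ∞),
      ∀ (g : ContMDiffMap (𝓡 e) 𝓘(ℝ, ℝ) Y ℝ (⊤ : ℕ∞)) (x : X), φ g x = g (f x) := by
  haveI : LocallyCompactSpace Y := MilnorExercise.locallyCompact (e := e)
  -- every point-evaluation of `φ` is a character, hence evaluation at some point
  have key : ∀ x : X, ∃ y : Y, ∀ g : ContMDiffMap (𝓡 e) 𝓘(ℝ, ℝ) Y ℝ (⊤ : ℕ∞), φ g x = g y := by
    intro x
    obtain ⟨y, hy⟩ := MilnorExercise.char_eq_eval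
      (((Pi.evalAlgHom ℝ (fun _ : X => ℝ) x).comp (ContMDiffMap.coeFnAlgHom : ContMDiffMap (𝓡 d) 𝓘(ℝ, ℝ) X ℝ (⊤ : ℕ∞) →ₐ[ℝ] X → ℝ)).comp φ)
    exact ⟨y, fun g => hy g⟩
  choose f0 hf0 using key
  -- continuity of `f0`
  have hcont : ∀ (x : X) (U : Set Y), IsOpen U → f0 x ∈ U → f0 ⁻¹' U ∈ nhds x := by
    intro x U hU hxU
    obtain ⟨b, hb_smooth, -, hb_supp, hb_one⟩ :=
      exists_contMDiff_support_eq_eq_one_iff (𝓡 e) hU isClosed_singleton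
        (singleton_subset_iff.mpr hxU)
    set B : ContMDiffMap (𝓡 e) 𝓘(ℝ, ℝ) Y ℝ (⊤ : ℕ∞) := ⟨b, hb_smooth⟩ with hB
    have h1 : φ B x = 1 := by rw [hf0 x]; exact (hb_one (f0 x)).mp rfl
    have h2 : {x' | φ B x' ≠ 0} ∈ nhds x := by
      apply (isOpen_ne_fun (φ B).contMDiff.continuous continuous_const).mem_nhds
      simp [h1]
    filter_upwards [h2] with x' hx'
    rw [hf0 x'] at hx'
    have : f0 x' ∈ support b := hx'
    rwa [hb_supp] at this
  -- smoothness of `f0`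
  have hsmooth : ContMDiff (𝓡 d) (𝓡 e) (⊤ : ℕ∞) f0 := by
    intro x₀
    set y₀ := f0 x₀ with hy₀
    set src := (chartAt (EuclideanSpace ℝ (Fin e)) y₀).source with hsrc
    have hsrc_open : IsOpen src := (chartAt _ y₀).open_source
    have hy₀src : y₀ ∈ src := mem_chart_source _ y₀
    -- a bump function equal to 1 near y₀ with support inside src
    obtain ⟨K, hK_comp, hy₀K, hK_src⟩ := exists_compact_subset hsrc_open hy₀src
    obtain ⟨b, hb_one, hb_zero, -⟩ :=
      exists_contMDiffMap_one_nhds_of_subset_interior (𝓡 e) (n := (⊤ : ℕ∞)) (isClosed_singleton (x := y₀))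
        (singleton_subset_iff.mpr hy₀K)
    obtain ⟨W, hW_mem, hW_one⟩ : ∃ W ∈ nhds y₀, ∀ y ∈ W, b y = 1 := by
      rw [nhdsSet_singleton] at hb_one
      exact ⟨{y | b y = 1}, hb_one, fun y hy => hy⟩
    have hb_tsupp : tsupport (⇑b) ⊆ src := by
      apply Subset.trans _ hK_src
      apply closure_minimal _ hK_comp.isClosed
      intro y hy
      by_contra hyK
      exact hy (hb_zero y hyK)
    -- globally smooth coordinate functions
    set g : Fin e → Y → ℝ := fun i y => b y * (extChartAt (𝓡 e) y₀ y) i with hg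
    have hgsm : ∀ i, ContMDiff (𝓡 e) 𝓘(ℝ, ℝ) (⊤ : ℕ∞) (g i) := by
      intro i y
      by_cases hy : y ∈ src
      · have h1 : ContMDiffAt (𝓡 e) 𝓘(ℝ, EuclideanSpace ℝ (Fin e)) (⊤ : ℕ∞) (extChartAt (𝓡 e) y₀) y :=
          contMDiffAt_extChartAt' hy
        have h2 : ContMDiffAt (𝓡 e) 𝓘(ℝ, ℝ) (⊤ : ℕ∞) (fun y => (extChartAt (𝓡 e) y₀ y) i) y :=
          ((EuclideanSpace.proj i : EuclideanSpace ℝ (Fin e) →L[ℝ] ℝ).contMDiff.contMDiffAt).comp y h1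
        exact (b.contMDiff y).mul h2
      · have hy' : y ∈ (tsupport (⇑b))ᶜ := fun hc => hy (hb_tsupp hc)
        apply ContMDiffAt.congr_of_eventuallyEq (contMDiffAt_const (c := (0:ℝ)))
        filter_upwards [(isClosed_tsupport (⇑b)).isOpen_compl.mem_nhds hy'] with z hz
        have : b z = 0 := image_eq_zero_of_notMem_tsupport hz
        simp [hg, this]
    set G : Fin e → ContMDiffMap (𝓡 e) 𝓘(ℝ, ℝ) Y ℝ (⊤ : ℕ∞) := fun i => ⟨g i, hgsm i⟩ with hG
    -- the smooth candidate for the chart representation of f0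
    set F : X → EuclideanSpace ℝ (Fin e) := fun x =>
      (EuclideanSpace.equiv (Fin e) ℝ).symm (fun i => φ (G i) x) with hF
    have hFsm : ContMDiff (𝓡 d) 𝓘(ℝ, EuclideanSpace ℝ (Fin e)) (⊤ : ℕ∞) F := by
      apply ContMDiff.comp (((EuclideanSpace.equiv (Fin e) ℝ).symm :
        (Fin e → ℝ) →L[ℝ] EuclideanSpace ℝ (Fin e)).contMDiff)
      exact contMDiff_pi_space.mpr fun i => (φ (G i)).contMDiff
    have hN : f0 ⁻¹' (W ∩ src) ∈ nhds x₀ := by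
      obtain ⟨W', hW'W, hW'o, hyW'⟩ := mem_nhds_iff.mp hW_mem
      have := hcont x₀ (W' ∩ src) (hW'o.inter hsrc_open) ⟨hyW', hy₀src⟩
      filter_upwards [this] with x hx
      exact ⟨hW'W hx.1, hx.2⟩
    have hFeq : ∀ x ∈ f0 ⁻¹' (W ∩ src), F x = extChartAt (𝓡 e) y₀ (f0 x) := by
      intro x hx
      ext i
      have h1 : F x i = φ (G i) x := rfl
      rw [h1, hf0 x (G i)]
      show g i (f0 x) = _
      rw [hg]
      simp only
      rw [hW_one (f0 x) hx.1, one_mul]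
    have hx₀N : x₀ ∈ f0 ⁻¹' (W ∩ src) := ⟨mem_of_mem_nhds hW_mem, hy₀src⟩
    have hFx₀ : F x₀ = extChartAt (𝓡 e) y₀ y₀ := hFeq x₀ hx₀N
    have htgt : (extChartAt (𝓡 e) y₀).target ∈ nhds (F x₀) := by
      rw [hFx₀]
      exact extChartAt_target_mem_nhds y₀
    have hcomp : ContMDiffAt (𝓡 d) (𝓡 e) (⊤ : ℕ∞) ((extChartAt (𝓡 e) y₀).symm ∘ F) x₀ :=
      (((contMDiffOn_extChartAt_symm y₀).contMDiffAt htgt)).comp x₀ (hFsm x₀)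
    apply hcomp.congr_of_eventuallyEq
    filter_upwards [hN] with x hx
    have h1 : F x = extChartAt (𝓡 e) y₀ (f0 x) := hFeq x hx
    have h2 : f0 x ∈ (extChartAt (𝓡 e) y₀).source := by
      rw [extChartAt_source]
      exact hx.2
    show f0 x = (extChartAt (𝓡 e) y₀).symm (F x)
    rw [h1, PartialEquiv.left_inv _ h2]
  refine ⟨⟨f0, hsmooth⟩, fun g x => hf0 x g, ?_⟩
  intro f' hf'
  ext x
  exact MilnorExercise.eval_inj (fun g => by rw [← hf' g x, hf0 x g]; rfl)
end
end

section
/- Let U ⊆ ℝ^n be open and let f ∈ C∞(ℝ^n) be a characteristic function for U, i.e. U = {x ∈ ℝ^n : f(x) ≠ 0}. Then the map Φ : C∞(ℝ^{n+1}) → C∞(U) defined by Φ(F)(x) = F(x_1,…,x_n, 1/f(x)) for x ∈ U is a surjective ℝ-algebra homomorphism whose kernel is the ideal of C∞(ℝ^{n+1}) generated by the single function (x_1,…,x_n,t) ↦ t·f(x_1,…,x_n) − 1. In particular C∞(U) ≅ C∞(ℝ^{n+1})/(x_{n+1} f(x_1,…,x_n) − 1) as ℝ-algebras. -/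
noncomputable section

/-- The `ℝ`-algebra `C∞(U)` of smooth functions `U → ℝ` on a subset `U ⊆ ℝ^n`: functions
which near each point of `U` agree with a smooth function on `ℝ^n` (for `U` open this is the
usual notion of smoothness). -/
def SmoothOnAlg (n : ℕ) (U : Set (Fin n → ℝ)) : Subalgebra ℝ (↥U → ℝ) where
  carrier := {g | ∀ p : ↥U, ∃ G : (Fin n → ℝ) → ℝ, ContDiff ℝ (⊤ : ℕ∞) G ∧
    ∀ᶠ x in nhds (p : Fin n → ℝ), ∀ h : x ∈ U, g ⟨x, h⟩ = G x}
  mul_mem' := fun {f g} hf hg => by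
    simp only [Set.mem_setOf_eq] at *
    intro p
    obtain ⟨Gf, hGf, ef⟩ := hf p
    obtain ⟨Gg, hGg, eg⟩ := hg p
    refine ⟨Gf * Gg, hGf.mul hGg, ?_⟩
    filter_upwards [ef, eg] with x hfx hgx h
    show f ⟨x, h⟩ * g ⟨x, h⟩ = Gf x * Gg x
    rw [hfx h, hgx h]
  one_mem' := by
    simp only [Set.mem_setOf_eq]
    intro p
    exact ⟨fun _ => 1, contDiff_const, Filter.Eventually.of_forall fun x h => rfl⟩
  add_mem' := fun {f g} hf hg => by
    simp only [Set.mem_setOf_eq] at *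
    intro p
    obtain ⟨Gf, hGf, ef⟩ := hf p
    obtain ⟨Gg, hGg, eg⟩ := hg p
    refine ⟨Gf + Gg, hGf.add hGg, ?_⟩
    filter_upwards [ef, eg] with x hfx hgx h
    show f ⟨x, h⟩ + g ⟨x, h⟩ = Gf x + Gg x
    rw [hfx h, hgx h]
  zero_mem' := by
    simp only [Set.mem_setOf_eq]
    intro p
    exact ⟨fun _ => 0, contDiff_const, Filter.Eventually.of_forall fun x h => rfl⟩
  algebraMap_mem' := fun r => by
    simp only [Set.mem_setOf_eq]
    intro p
    exact ⟨fun _ => r, contDiff_const, Filter.Eventually.of_forall fun x h => rfl⟩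


open MeasureTheory intervalIntegral Metric

set_option synthInstance.maxHeartbeats 1000000
set_option maxHeartbeats 1000000

theorem contDiff_parint {E : Type} [NormedAddCommGroup E] [NormedSpace ℝ E]
    [FiniteDimensional ℝ E] :
    ∀ (n : ℕ) {F : Type} [NormedAddCommGroup F] [NormedSpace ℝ F] [CompleteSpace F],
      ∀ H : E × ℝ → F, ContDiff ℝ (⊤ : ℕ∞) H →
      ContDiff ℝ n (fun x => ∫ s in (0:ℝ)..1, H (x, s)) := by
  intro n
  induction n with
  | zero =>
    intro F _ _ _ H hH
    simp only [Nat.cast_zero, contDiff_zero]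
    exact intervalIntegral.continuous_parametric_intervalIntegral_of_continuous'
      (f := fun x s => H (x, s)) (by exact hH.continuous) 0 1
  | succ n ih =>
    intro F _ _ _ H hH
    have hH' : Differentiable ℝ H := hH.differentiable (by simp)
    set D : E × ℝ → E →L[ℝ] F :=
      fun p => (fderiv ℝ H p).comp ((ContinuousLinearMap.id ℝ E).prod (0 : E →L[ℝ] ℝ))
      with hD
    have hDsmooth : ContDiff ℝ (⊤ : ℕ∞) D := by
      apply ContDiff.clm_comp _ contDiff_const
      exact (contDiff_infty_iff_fderiv.1 (by exact_mod_cast hH)).2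
    have hDcont : Continuous D := hDsmooth.continuous
    have key : ∀ x₀ : E, HasFDerivAt (fun x => ∫ s in (0:ℝ)..1, H (x, s))
        (∫ s in (0:ℝ)..1, D (x₀, s)) x₀ := by
      intro x₀
      obtain ⟨C, hC⟩ : ∃ C, ∀ p ∈ (closedBall x₀ 1) ×ˢ (Set.uIcc (0:ℝ) 1), ‖D p‖ ≤ C :=
        ((isCompact_closedBall x₀ 1).prod isCompact_uIcc).exists_bound_of_continuousOn
          hDcont.continuousOn
      apply intervalIntegral.hasFDerivAt_integral_of_dominated_of_fderiv_le
        (F := fun x s => H (x, s)) (F' := fun x s => D (x, s)) (bound := fun _ => C)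
        (s := ball x₀ 1) (ball_mem_nhds x₀ one_pos)
      · filter_upwards with x
        exact (hH.continuous.comp (Continuous.prodMk_right x)).aestronglyMeasurable
      · exact (hH.continuous.comp (Continuous.prodMk_right x₀)).intervalIntegrable 0 1
      · exact (hDcont.comp (Continuous.prodMk_right x₀)).aestronglyMeasurable
      · filter_upwards with s hs x hx
        exact hC (x, s) ⟨ball_subset_closedBall hx, Set.uIoc_subset_uIcc hs⟩
      · exact intervalIntegrable_const
      · filter_upwards with s _ x _
        have h1 : HasFDerivAt (fun y : E => (y, s))
            ((ContinuousLinearMap.id ℝ E).prod (0 : E →L[ℝ] ℝ)) x :=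
          (hasFDerivAt_id x).prodMk (hasFDerivAt_const s x)
        exact ((hH' (x, s)).hasFDerivAt.comp x h1)
    rw [show ((n + 1 : ℕ) : WithTop ℕ∞) = (n : WithTop ℕ∞) + 1 by norm_cast]
    rw [contDiff_succ_iff_fderiv]
    refine ⟨fun x => (key x).differentiableAt, by simp, ?_⟩
    have : (fderiv ℝ fun x => ∫ s in (0:ℝ)..1, H (x, s)) =
        fun x₀ => ∫ s in (0:ℝ)..1, D (x₀, s) := funext fun x₀ => (key x₀).fderiv
    rw [this]
    exact ih D hDsmooth

theorem smooth_inv_away (r : ℝ) (hr : 0 < r) :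
    ∃ ν : ℝ → ℝ, ContDiff ℝ (⊤ : ℕ∞) ν ∧ ∀ v : ℝ, r ≤ |v| → ν v = v⁻¹ := by
  set b : ContDiffBump (0 : ℝ) := ⟨r/2, r, by positivity, by linarith⟩ with hb
  have hpos : ∀ v : ℝ, 0 < v^2 + (b v)^2 := by
    intro v
    rcases eq_or_ne v 0 with h | h
    · have : b v = 1 := b.one_of_mem_closedBall (by simp [h, hb, le_of_lt (half_pos hr)])
      rw [this]; positivity
    · have : 0 < v^2 := by positivity
      nlinarith [sq_nonneg (b v)]
  refine ⟨fun v => v / (v^2 + (b v)^2), ?_, ?_⟩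
  · exact contDiff_id.div ((contDiff_id.pow 2).add ((b.contDiff (n := (⊤:ℕ∞))).pow 2))
      (fun v => (hpos v).ne')
  · intro v hv
    have hv0 : v ≠ 0 := by
      intro h; rw [h] at hv; simp at hv; linarith
    have hbz : b v = 0 := b.zero_of_le_dist (by simpa [Real.dist_eq] using hv)
    simp only [hbz]
    rw [ne_eq] at hv0
    field_simp
    ring

theorem contDiff_snoc (n : ℕ) :
    ContDiff ℝ (⊤ : ℕ∞)
      (fun p : (Fin n → ℝ) × ℝ => (Fin.snoc p.1 p.2 : Fin (n+1) → ℝ)) := by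
  apply contDiff_pi.2
  intro i
  refine Fin.lastCases ?_ ?_ i
  · simp only [Fin.snoc_last]
    exact contDiff_snd
  · intro j
    simp only [Fin.snoc_castSucc]
    exact (contDiff_pi.mp contDiff_id j).comp contDiff_fst

theorem contDiff_initf (n : ℕ) :
    ContDiff ℝ (⊤ : ℕ∞)
      (fun y : Fin (n+1) → ℝ => (fun i => y i.castSucc : Fin n → ℝ)) := by
  apply contDiff_pi.2
  intro i
  exact contDiff_pi.mp contDiff_id i.castSucc

/-- decomposition `y + c • (snoc 0 1) = snoc (init y) (y_last + c)`. -/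
theorem snoc_decomp (n : ℕ) (y : Fin (n+1) → ℝ) (c : ℝ) :
    y + c • (Fin.snoc (0 : Fin n → ℝ) (1:ℝ) : Fin (n+1) → ℝ)
      = Fin.snoc (fun i => y i.castSucc) (y (Fin.last n) + c) := by
  funext i
  refine Fin.lastCases ?_ ?_ i
  · simp [Fin.snoc_last]
  · intro j
    simp [Fin.snoc_castSucc]

theorem init_snoc' (n : ℕ) (x : Fin n → ℝ) (t : ℝ) :
    (fun i : Fin n => (Fin.snoc x t : Fin (n+1) → ℝ) i.castSucc) = x := by
  funext i; simp [Fin.snoc_castSucc]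


/-- If `U = {f ≠ 0}` for `f ∈ C^∞(ℝ^n)`, then `F ↦ F(x, 1/f(x))` is a surjective `ℝ`-algebra
homomorphism `C^∞(ℝ^{n+1}) → C^∞(U)` with kernel the principal ideal generated by
`t·f(x) − 1`; in particular `C^∞(U) ≅ C^∞(ℝ^{n+1})/(x_{n+1} f(x_1,…,x_n) − 1)`. -/
theorem smoothOnAlg_iso_quotient (n : ℕ) (U : Set (Fin n → ℝ)) (hUopen : IsOpen U)
    (f : SmoothAlg n) (hchar : U = {x | (f : (Fin n → ℝ) → ℝ) x ≠ 0}) :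
    ∃ Φ : SmoothAlg (n + 1) →ₐ[ℝ] SmoothOnAlg n U,
      (∀ (F : SmoothAlg (n + 1)) (x : ↥U),
          (Φ F : ↥U → ℝ) x
            = (F : (Fin (n + 1) → ℝ) → ℝ)
                (Fin.snoc (x : Fin n → ℝ) (1 / (f : (Fin n → ℝ) → ℝ) (x : Fin n → ℝ)))) ∧
      Function.Surjective Φ ∧
      ∃ P : SmoothAlg (n + 1),
        (∀ y : Fin (n + 1) → ℝ,
            (P : (Fin (n + 1) → ℝ) → ℝ) y
              = y (Fin.last n) * (f : (Fin n → ℝ) → ℝ) (fun i => y i.castSucc) - 1) ∧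
        RingHom.ker Φ = Ideal.span {P} := by
  classical
  have hf : ContDiff ℝ (⊤ : ℕ∞) (f : (Fin n → ℝ) → ℝ) := f.2
  set fv : (Fin n → ℝ) → ℝ := (f : (Fin n → ℝ) → ℝ) with hfv
  -- basic smooth maps
  set init : (Fin (n+1) → ℝ) → (Fin n → ℝ) := fun y => (fun i => y i.castSucc) with hinit_def
  set tl : (Fin (n+1) → ℝ) → ℝ := fun y => y (Fin.last n) with htl_def
  set uu : (Fin (n+1) → ℝ) → ℝ := fun y => tl y * fv (init y) with huu_def
  have hinit : ContDiff ℝ (⊤ : ℕ∞) init := contDiff_initf n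
  have htl : ContDiff ℝ (⊤ : ℕ∞) tl := contDiff_pi.mp contDiff_id (Fin.last n)
  have huu : ContDiff ℝ (⊤ : ℕ∞) uu := htl.mul (hf.comp hinit)
  have hUne : ∀ x (_ : x ∈ U), fv x ≠ 0 := by
    intro x hx; rw [hchar] at hx; exact hx
  have hne_mem : ∀ x, fv x ≠ 0 → x ∈ U := by
    intro x hx; rw [hchar]; exact hx
  -- the bump β : 1 on [3/4,5/4], support (1/2,3/2)
  set β : ContDiffBump (1 : ℝ) := ⟨1/4, 1/2, by norm_num, by norm_num⟩ with hβ_def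
  have hβsm : ContDiff ℝ (⊤ : ℕ∞) β := β.contDiff
  have hβ1 : β 1 = 1 := β.one_of_mem_closedBall (by
    rw [mem_closedBall, dist_self]; norm_num [hβ_def])
  have hβ_zero : ∀ v : ℝ, v ≤ 1/2 → β v = 0 := by
    intro v hv
    apply β.zero_of_le_dist
    rw [Real.dist_eq]
    rw [abs_sub_comm, abs_of_nonneg (by linarith)]
    simp only [hβ_def]
    linarith
  -- well-definedness of Φ
  have mem : ∀ F : SmoothAlg (n+1),
      (fun x : ↥U => (F : (Fin (n+1) → ℝ) → ℝ) (Fin.snoc (x : Fin n → ℝ) (fv x)⁻¹))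
        ∈ SmoothOnAlg n U := by
    intro F p
    have hfp : fv (p : Fin n → ℝ) ≠ 0 := hUne _ p.2
    obtain ⟨ν, hν, hνinv⟩ := smooth_inv_away (|fv (p : Fin n → ℝ)|/2)
      (by positivity)
    refine ⟨fun x => (F : (Fin (n+1) → ℝ) → ℝ) (Fin.snoc x (ν (fv x))), ?_, ?_⟩
    · have hF2 : ContDiff ℝ (⊤ : ℕ∞) (F : (Fin (n+1) → ℝ) → ℝ) := F.2
      exact hF2.comp ((contDiff_snoc n).comp (contDiff_id.prodMk (hν.comp hf)))
    · have hev : ∀ᶠ x in nhds (p : Fin n → ℝ), |fv (p : Fin n → ℝ)|/2 < |fv x| := by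
        have hc : ContinuousAt (fun x => |fv x|) (p : Fin n → ℝ) :=
          (hf.continuous.abs).continuousAt
        exact hc.eventually_const_lt (by simpa using half_lt_self (abs_pos.2 hfp))
      filter_upwards [hev] with x hx h
      rw [hνinv (fv x) (le_of_lt hx)]
  -- the algebra morphism
  set Φ : SmoothAlg (n + 1) →ₐ[ℝ] SmoothOnAlg n U :=
    { toFun := fun F => ⟨_, mem F⟩
      map_one' := rfl
      map_mul' := fun F G => rfl
      map_zero' := rfl
      map_add' := fun F G => rfl
      commutes' := fun r => rfl } with hΦ_def
  have hΦval : ∀ (F : SmoothAlg (n+1)) (x : ↥U),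
      (Φ F : ↥U → ℝ) x
        = (F : (Fin (n+1) → ℝ) → ℝ) (Fin.snoc (x : Fin n → ℝ) (fv x)⁻¹) := fun F x => rfl
  refine ⟨Φ, ?_, ?_, ?_⟩
  · intro F x
    rw [hΦval F x, one_div]
  · -- surjectivity
    intro g
    set ext : (Fin n → ℝ) → ℝ := fun x => if h : x ∈ U then (g : ↥U → ℝ) ⟨x, h⟩ else 0
      with hext_def
    set Fv : (Fin (n+1) → ℝ) → ℝ := fun y => ext (init y) * β (uu y) with hFv_def
    have hFv_smooth : ContDiff ℝ (⊤ : ℕ∞) Fv := by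
      rw [contDiff_iff_contDiffAt]
      intro y₀
      by_cases hfy : fv (init y₀) = 0
      · have hev : ∀ᶠ y in nhds y₀, Fv y = 0 := by
        -- eventually uu y < 1/2
          have h0 : uu y₀ < 1/2 := by rw [huu_def]; simp [hfy]
          have hc : ContinuousAt uu y₀ := huu.continuous.continuousAt
          filter_upwards [hc.eventually_lt_const h0] with y hy
          rw [hFv_def]
          simp only
          rw [hβ_zero _ (le_of_lt hy), mul_zero]
        exact (contDiffAt_const (c := (0:ℝ))).congr_of_eventuallyEq hev
      · have hx₀U : init y₀ ∈ U := hne_mem _ hfy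
        obtain ⟨G, hG, hGev⟩ := g.2 ⟨init y₀, hx₀U⟩
        have hev : ∀ᶠ y in nhds y₀, Fv y = G (init y) * β (uu y) := by
          have h1 : ∀ᶠ y in nhds y₀,
              ∀ h : init y ∈ U, (g : ↥U → ℝ) ⟨init y, h⟩ = G (init y) :=
            (hinit.continuous.tendsto y₀).eventually hGev
          filter_upwards [h1] with y hy
          by_cases hU : init y ∈ U
          · rw [hFv_def]; simp only
            rw [hext_def]; simp only [dif_pos hU, hy hU]
          · have hf0 : fv (init y) = 0 := by
              by_contra hne
              exact hU (hne_mem _ hne)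
            have hu0 : uu y = 0 := by rw [huu_def]; simp [hf0]
            rw [hFv_def]; simp only
            rw [hu0, hβ_zero 0 (by norm_num), mul_zero, mul_zero]
        exact (((hG.comp hinit).mul (hβsm.comp huu)).contDiffAt).congr_of_eventuallyEq hev
    refine ⟨⟨Fv, hFv_smooth⟩, ?_⟩
    apply Subtype.ext
    funext x
    have hx : fv (x : Fin n → ℝ) ≠ 0 := hUne _ x.2
    have h1 : init (Fin.snoc (x : Fin n → ℝ) (fv x)⁻¹) = (x : Fin n → ℝ) := init_snoc' n _ _
    have h2 : uu (Fin.snoc (x : Fin n → ℝ) (fv x)⁻¹) = 1 := by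
      rw [huu_def]; simp only [htl_def, h1, Fin.snoc_last]
      exact inv_mul_cancel₀ hx
    rw [hΦval]
    show Fv (Fin.snoc (x : Fin n → ℝ) (fv x)⁻¹) = (g : ↥U → ℝ) x
    rw [hFv_def]; simp only
    rw [h1, h2, hβ1, mul_one, hext_def]
    simp only [dif_pos x.2]
  · -- kernel
    set e : Fin (n+1) → ℝ := Fin.snoc (0 : Fin n → ℝ) (1:ℝ) with he_def
    set Pv : (Fin (n+1) → ℝ) → ℝ := fun y => uu y - 1 with hPv_def
    have hPsm : Pv ∈ SmoothAlg (n+1) := huu.sub contDiff_const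
    refine ⟨⟨Pv, hPsm⟩, fun y => rfl, ?_⟩
    have hΦP : (⟨Pv, hPsm⟩ : SmoothAlg (n+1)) ∈ RingHom.ker Φ := by
      rw [RingHom.mem_ker]
      apply Subtype.ext
      funext x
      have hx : fv (x : Fin n → ℝ) ≠ 0 := hUne _ x.2
      have h1 : tl (Fin.snoc ((x : Fin n → ℝ)) ((fv x)⁻¹)) = (fv x)⁻¹ := Fin.snoc_last _ _
      have h2 : init (Fin.snoc ((x : Fin n → ℝ)) ((fv x)⁻¹)) = (x : Fin n → ℝ) :=
        init_snoc' n _ _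
      show tl (Fin.snoc ((x : Fin n → ℝ)) ((fv x)⁻¹))
          * fv (init (Fin.snoc ((x : Fin n → ℝ)) ((fv x)⁻¹))) - 1 = 0
      rw [h1, h2, inv_mul_cancel₀ hx, sub_self]
    refine le_antisymm ?_ (Ideal.span_le.2 (Set.singleton_subset_iff.2 hΦP))
    intro F hF
    have hF2 : ContDiff ℝ (⊤ : ℕ∞) (F : (Fin (n+1) → ℝ) → ℝ) := F.2
    have hFzero : ∀ x, x ∈ U → (F : (Fin (n+1) → ℝ) → ℝ) (Fin.snoc x (fv x)⁻¹) = 0 := by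
      intro x hx
      have h0 := congrFun (congrArg Subtype.val (RingHom.mem_ker.mp hF)) ⟨x, hx⟩
      exact h0
    -- auxiliary smooth functions
    obtain ⟨ν₄, hν₄, hν₄inv⟩ := smooth_inv_away (1/4) (by norm_num)
    set γ : ℝ → ℝ := fun v => (1 - β v) * ν₄ (v - 1) with hγ_def
    have hγsm : ContDiff ℝ (⊤:ℕ∞) γ :=
      (contDiff_const.sub hβsm).mul (hν₄.comp (contDiff_id.sub contDiff_const))
    have hγ : ∀ v : ℝ, (v - 1) * γ v = 1 - β v := by
      intro v
      rcases le_or_gt (1/4 : ℝ) |v - 1| with h | h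
      · rw [hγ_def]
        simp only
        rw [hν₄inv _ h]
        have hvne : v - 1 ≠ 0 := by
          intro h0; rw [h0] at h; simp at h; linarith
        field_simp
      · have hβv : β v = 1 := β.one_of_mem_closedBall
          (by rw [mem_closedBall, Real.dist_eq]; exact le_of_lt h)
        rw [hγ_def]
        simp only [hβv]
        ring
    obtain ⟨ν₂, hν₂, hν₂inv⟩ := smooth_inv_away (1/2) (by norm_num)
    set β₃ : ContDiffBump (1:ℝ) := ⟨1/2, 3/4, by norm_num, by norm_num⟩ with hβ₃_def
    set μ : ℝ → ℝ := fun u => β₃ u * ν₂ u with hμ_def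
    have hμsm : ContDiff ℝ (⊤:ℕ∞) μ := β₃.contDiff.mul hν₂
    have hμinv : ∀ u : ℝ, u ∈ ball (1:ℝ) (1/2) → μ u = u⁻¹ := by
      intro u hu
      rw [mem_ball, Real.dist_eq] at hu
      have h1 : β₃ u = 1 := β₃.one_of_mem_closedBall
        (by rw [mem_closedBall, Real.dist_eq]; exact le_of_lt hu)
      have h2 : (1/2:ℝ) ≤ |u| := by
        rcases abs_lt.mp hu with ⟨ha, hb⟩
        rw [abs_of_pos (by linarith)]
        linarith
      rw [hμ_def]
      simp only [h1, one_mul]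
      exact hν₂inv u h2
    set dd : (Fin (n+1) → ℝ) → ℝ := fun y => tl y * (1 - uu y) * μ (uu y) with hdd_def
    have hddsm : ContDiff ℝ (⊤:ℕ∞) dd := (htl.mul (contDiff_const.sub huu)).mul (hμsm.comp huu)
    set A : (Fin (n+1) → ℝ) × ℝ → ℝ :=
      fun p => fderiv ℝ (F : (Fin (n+1) → ℝ) → ℝ) (p.1 + p.2 • (dd p.1 • e)) e with hA_def
    have hAsm : ContDiff ℝ (⊤:ℕ∞) A := by
      have hB : ContDiff ℝ (⊤:ℕ∞) (fun z => fderiv ℝ (F : (Fin (n+1) → ℝ) → ℝ) z e) := by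
        apply ContDiff.clm_apply _ contDiff_const
        exact (contDiff_infty_iff_fderiv.1 (by exact_mod_cast hF2)).2
      exact hB.comp (contDiff_fst.add
        (contDiff_snd.smul ((hddsm.comp contDiff_fst).smul contDiff_const)))
    set IA : (Fin (n+1) → ℝ) → ℝ := fun y => ∫ s in (0:ℝ)..1, A (y, s) with hIA_def
    have hIAsm : ContDiff ℝ (⊤:ℕ∞) IA := by
      exact contDiff_infty.2 fun m => contDiff_parint m A hAsm
    set Qv : (Fin (n+1) → ℝ) → ℝ :=
      fun y => tl y * μ (uu y) * β (uu y) * IA y + (F : (Fin (n+1) → ℝ) → ℝ) y * γ (uu y)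
      with hQv_def
    have hQsm : Qv ∈ SmoothAlg (n+1) :=
      (((htl.mul (hμsm.comp huu)).mul (hβsm.comp huu)).mul hIAsm).add
        (hF2.mul (hγsm.comp huu))
    have hFdiff : Differentiable ℝ (F : (Fin (n+1) → ℝ) → ℝ) :=
      hF2.differentiable (by simp)
    have key : ∀ y, Qv y * Pv y = (F : (Fin (n+1) → ℝ) → ℝ) y := by
      intro y
      have hFTC : ∫ s in (0:ℝ)..1, (dd y * A (y, s) * β (uu y))
          = (F : (Fin (n+1) → ℝ) → ℝ) (y + (1:ℝ) • (dd y • e)) * β (uu y)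
            - (F : (Fin (n+1) → ℝ) → ℝ) (y + (0:ℝ) • (dd y • e)) * β (uu y) := by
        apply intervalIntegral.integral_eq_sub_of_hasDerivAt
          (f := fun s => (F : (Fin (n+1) → ℝ) → ℝ) (y + s • (dd y • e)) * β (uu y))
        · intro s hs
          have h1 : HasDerivAt (fun s : ℝ => y + s • (dd y • e)) (dd y • e) s := by
            simpa using ((hasDerivAt_id s).smul_const (dd y • e)).const_add y
          have h2 := ((hFdiff _).hasFDerivAt).comp_hasDerivAt s h1
          have h3 : fderiv ℝ (F : (Fin (n+1) → ℝ) → ℝ) (y + s • (dd y • e)) (dd y • e)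
              = dd y * A (y, s) := by
            simp only [_root_.map_smul, smul_eq_mul]
            rfl
          rw [h3] at h2
          exact h2.mul_const (β (uu y))
        · apply Continuous.intervalIntegrable
          exact (continuous_const.mul (hAsm.continuous.comp (Continuous.prodMk_right y))).mul
            continuous_const
      have h00 : y + (0:ℝ) • (dd y • e) = y := by simp
      have h11 : (F : (Fin (n+1) → ℝ) → ℝ) (y + (1:ℝ) • (dd y • e)) * β (uu y) = 0 := by
        by_cases hβu : β (uu y) = 0
        · rw [hβu, mul_zero]
        · have hu_ball : uu y ∈ ball (1:ℝ) (1/2) := by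
            rw [show ball (1:ℝ) (1/2) = ball (1:ℝ) β.rOut from rfl, ← β.support_eq]
            exact hβu
          have hub : |uu y - 1| < 1/2 := by
            rw [mem_ball, Real.dist_eq] at hu_ball; exact hu_ball
          have hupos : (1/2:ℝ) < uu y := by
            rcases abs_lt.mp hub with ⟨h, _⟩; linarith
          have hu0 : uu y ≠ 0 := by linarith
          have hux : uu y = tl y * fv (init y) := rfl
          obtain ⟨ht0, hfx⟩ := mul_ne_zero_iff.mp (hux ▸ hu0)
          have hμu : μ (uu y) = (uu y)⁻¹ := hμinv _ hu_ball
          have hsum : tl y + dd y = (fv (init y))⁻¹ := by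
            show tl y + tl y * (1 - uu y) * μ (uu y) = (fv (init y))⁻¹
            rw [hμu, hux, mul_inv]
            have h1 : tl y * (1 - tl y * fv (init y)) * ((tl y)⁻¹ * (fv (init y))⁻¹)
                = tl y * (tl y)⁻¹ * ((1 - tl y * fv (init y)) * (fv (init y))⁻¹) := by ring
            rw [h1, mul_inv_cancel₀ ht0, one_mul, sub_mul, one_mul, mul_assoc,
              mul_inv_cancel₀ hfx, mul_one]
            ring
          have hy1 : y + (1:ℝ) • (dd y • e) = Fin.snoc (init y) ((fv (init y))⁻¹) := by
            rw [one_smul, he_def, snoc_decomp n y (dd y), ← hsum]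
          rw [hy1, hFzero _ (hne_mem _ hfx), zero_mul]
      have hpull : ∫ s in (0:ℝ)..1, (dd y * A (y, s) * β (uu y))
          = dd y * β (uu y) * IA y := by
        have hfun : (fun s => dd y * A (y, s) * β (uu y))
            = fun s => (dd y * β (uu y)) * A (y, s) := by
          funext s; ring
        rw [hfun, intervalIntegral.integral_const_mul, hIA_def]
      have hmain : dd y * β (uu y) * IA y
          = 0 - (F : (Fin (n+1) → ℝ) → ℝ) y * β (uu y) := by
        rw [← hpull, hFTC, h00, h11]
      have hγu := hγ (uu y)
      rw [hdd_def] at hmain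
      simp only at hmain
      show (tl y * μ (uu y) * β (uu y) * IA y
          + (F : (Fin (n+1) → ℝ) → ℝ) y * γ (uu y)) * (uu y - 1)
        = (F : (Fin (n+1) → ℝ) → ℝ) y
      linear_combination (-1 : ℝ) * hmain + ((F : (Fin (n+1) → ℝ) → ℝ) y) * hγu
    exact Ideal.mem_span_singleton'.2 ⟨⟨Qv, hQsm⟩, Subtype.ext (funext key)⟩

end
end
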